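/- arXiv:2101.04902 — 3 statements merged into one kernel-verified Lean document; each statement's English description precedes it below -/
import Mathlib

section
/- Let T > 0 and μ > 0. Let z₀ ∈ C([0,T];ℝ), let a : D₁ → ℝ be continuous on D₁ = {(t,s) : 0 ≤ s ≤ t ≤ T} and b : D₂ → ℝ continuous on D₂ = {(t,s,σ) : 0 ≤ s ≤ t, 0 ≤ σ ≤ t, t ≤ T}, with ā := max_{D₁}|a| and b̄ := max_{D₂}|b|. Define the operator S on C([0,T];ℝ) by (Sz)(t) := z₀(t) + ∫₀ᵗ a(t,s)z(s) ds + (1/2)∫₀ᵗ∫₀ᵗ b(t,s,σ)z(s)z(σ) ds dσ, and the weighted norm ‖z‖_μ := max_{0≤t≤T} e^{−μt}|z(t)|. Then for every z ∈ C([0,T];ℝ), ‖Sz‖_μ ≤ ‖z₀‖_μ + ā·(1 − e^{−μT})/μ · ‖z‖_μ + b̄·(cosh(μT) − 1)/μ² · ‖z‖_μ². -/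
open MeasureTheory Set

/-- The weighted norm `‖z‖_μ = max_{0 ≤ t ≤ T} e^{−μt}|z(t)|` on `C([0,T];ℝ)`. -/
noncomputable def wnorm (μ T : ℝ) (z : ℝ → ℝ) : ℝ :=
  sSup ((fun t => Real.exp (-(μ * t)) * |z t|) '' Icc 0 T)

/-- The operator `S` representing the right-hand side of the scalar Riccati–Volterra
equation: `(Sz)(t) = z₀(t) + ∫₀ᵗ a(t,s)z(s)ds + (1/2)∫₀ᵗ∫₀ᵗ b(t,s,σ)z(s)z(σ)ds dσ`. -/
noncomputable def riccOp (z₀ : ℝ → ℝ) (a : ℝ → ℝ → ℝ) (b : ℝ → ℝ → ℝ → ℝ)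
    (z : ℝ → ℝ) : ℝ → ℝ :=
  fun t => z₀ t + (∫ s in (0:ℝ)..t, a t s * z s) +
    (1/2) * ∫ s in (0:ℝ)..t, ∫ σ in (0:ℝ)..t, b t s σ * z s * z σ

private lemma int_exp_mul (μ t : ℝ) (hμ : μ ≠ 0) :
    ∫ s in (0:ℝ)..t, Real.exp (μ * s) = (Real.exp (μ * t) - 1) / μ := by
  rw [intervalIntegral.integral_comp_mul_left Real.exp hμ]
  simp [integral_exp, Real.exp_zero, smul_eq_mul]
  field_simp

private lemma wnorm_bddAbove {μ T : ℝ} {z : ℝ → ℝ} (hz : ContinuousOn z (Icc 0 T)) :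
    BddAbove ((fun t => Real.exp (-(μ * t)) * |z t|) '' Icc 0 T) := by
  refine (isCompact_Icc.image_of_continuousOn ?_).bddAbove
  exact ((Real.continuous_exp.comp (continuous_const.mul continuous_id).neg).continuousOn).mul
    hz.abs

/-- The fundamental estimate (6.7):
`‖Sz‖_μ ≤ ‖z₀‖_μ + ā(1−e^{−μT})/μ ‖z‖_μ + b̄(cosh(μT)−1)/μ² ‖z‖_μ²`. -/
theorem riccati_volterra_operator_estimate
    (T μ : ℝ) (hT : 0 < T) (hμ : 0 < μ)
    (z₀ : ℝ → ℝ) (hz₀ : ContinuousOn z₀ (Icc 0 T))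
    (a : ℝ → ℝ → ℝ)
    (hacont : ContinuousOn (fun p : ℝ × ℝ => a p.1 p.2)
      {p : ℝ × ℝ | 0 ≤ p.2 ∧ p.2 ≤ p.1 ∧ p.1 ≤ T})
    (b : ℝ → ℝ → ℝ → ℝ)
    (hbcont : ContinuousOn (fun p : ℝ × ℝ × ℝ => b p.1 p.2.1 p.2.2)
      {p : ℝ × ℝ × ℝ | 0 ≤ p.2.1 ∧ p.2.1 ≤ p.1 ∧ 0 ≤ p.2.2 ∧ p.2.2 ≤ p.1 ∧ p.1 ≤ T})
    (abar : ℝ)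
    (habar : IsGreatest ((fun p : ℝ × ℝ => |a p.1 p.2|) ''
      {p : ℝ × ℝ | 0 ≤ p.2 ∧ p.2 ≤ p.1 ∧ p.1 ≤ T}) abar)
    (bbar : ℝ)
    (hbbar : IsGreatest ((fun p : ℝ × ℝ × ℝ => |b p.1 p.2.1 p.2.2|) ''
      {p : ℝ × ℝ × ℝ | 0 ≤ p.2.1 ∧ p.2.1 ≤ p.1 ∧ 0 ≤ p.2.2 ∧ p.2.2 ≤ p.1 ∧ p.1 ≤ T}) bbar)
    (z : ℝ → ℝ) (hz : ContinuousOn z (Icc 0 T)) :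
    wnorm μ T (riccOp z₀ a b z) ≤
      wnorm μ T z₀ + abar * ((1 - Real.exp (-(μ * T))) / μ) * wnorm μ T z +
        bbar * ((Real.cosh (μ * T) - 1) / μ ^ 2) * (wnorm μ T z) ^ 2 := by
  have hμ' : μ ≠ 0 := ne_of_gt hμ
  set N := wnorm μ T z with hNdef
  set W := wnorm μ T z₀ with hWdef
  obtain ⟨p, -, hpa⟩ := habar.1
  have habar0 : 0 ≤ abar := hpa ▸ abs_nonneg _
  obtain ⟨q, -, hqb⟩ := hbbar.1
  have hbbar0 : 0 ≤ bbar := hqb ▸ abs_nonneg _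
  have hbz : BddAbove ((fun t => Real.exp (-(μ * t)) * |z t|) '' Icc 0 T) := wnorm_bddAbove hz
  have hbz₀ : BddAbove ((fun t => Real.exp (-(μ * t)) * |z₀ t|) '' Icc 0 T) := wnorm_bddAbove hz₀
  have hN0 : 0 ≤ N := by
    have h0 : (0:ℝ) ≤ Real.exp (-(μ * 0)) * |z 0| := by positivity
    exact h0.trans (le_csSup hbz ⟨0, ⟨le_refl _, hT.le⟩, rfl⟩)
  have hW0 : 0 ≤ W := by
    have h0 : (0:ℝ) ≤ Real.exp (-(μ * 0)) * |z₀ 0| := by positivity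
    exact h0.trans (le_csSup hbz₀ ⟨0, ⟨le_refl _, hT.le⟩, rfl⟩)
  have hzN : ∀ s ∈ Icc (0:ℝ) T, |z s| ≤ Real.exp (μ * s) * N := by
    intro s hs
    have h1 : Real.exp (-(μ * s)) * |z s| ≤ N := le_csSup hbz ⟨s, hs, rfl⟩
    have key : Real.exp (μ * s) * Real.exp (-(μ * s)) = 1 := by
      rw [← Real.exp_add]; simp
    calc |z s| = Real.exp (μ * s) * (Real.exp (-(μ * s)) * |z s|) := by
              rw [← mul_assoc, key, one_mul]
      _ ≤ Real.exp (μ * s) * N :=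
          mul_le_mul_of_nonneg_left h1 (Real.exp_pos _).le
  -- nonnegativity of the RHS
  have heT1 : Real.exp (-(μ * T)) ≤ 1 := Real.exp_le_one_iff.2 (by nlinarith)
  have hRHS0 : 0 ≤ W + abar * ((1 - Real.exp (-(μ * T))) / μ) * N +
      bbar * ((Real.cosh (μ * T) - 1) / μ ^ 2) * N ^ 2 := by
    have h1 : 0 ≤ abar * ((1 - Real.exp (-(μ * T))) / μ) * N :=
      mul_nonneg (mul_nonneg habar0 (div_nonneg (by linarith) hμ.le)) hN0
    have h2 : 0 ≤ bbar * ((Real.cosh (μ * T) - 1) / μ ^ 2) * N ^ 2 :=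
      mul_nonneg (mul_nonneg hbbar0 (div_nonneg
        (by linarith [Real.one_le_cosh (μ * T)]) (by positivity))) (by positivity)
    linarith
  rw [show wnorm μ T (riccOp z₀ a b z) =
      sSup ((fun t => Real.exp (-(μ * t)) * |riccOp z₀ a b z t|) '' Icc 0 T) from rfl]
  refine Real.sSup_le ?_ hRHS0
  rintro x ⟨t, ⟨ht0, htT⟩, rfl⟩
  set u := Real.exp (μ * t) with hudef
  have hu0 : 0 < u := Real.exp_pos _
  have hu1 : 1 ≤ u := Real.one_le_exp (by positivity)
  have hvinv : Real.exp (-(μ * t)) = u⁻¹ := Real.exp_neg _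
  have hE : ∫ s in (0:ℝ)..t, Real.exp (μ * s) = (u - 1) / μ := int_exp_mul μ t hμ'
  have hIoc : Set.uIoc (0:ℝ) t = Ioc 0 t := uIoc_of_le ht0
  -- bound for the first integral
  have hI1 : ‖∫ s in (0:ℝ)..t, a t s * z s‖ ≤ abar * N * ((u - 1) / μ) := by
    have hb : IntervalIntegrable (fun s => abar * N * Real.exp (μ * s)) volume 0 t :=
      (Continuous.intervalIntegrable (by fun_prop) _ _)
    have hae : ∀ᵐ s ∂volume.restrict (Set.uIoc (0:ℝ) t),
        ‖a t s * z s‖ ≤ abar * N * Real.exp (μ * s) := by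
      refine (ae_restrict_mem measurableSet_uIoc).mono fun s hs => ?_
      rw [hIoc] at hs
      have hsa : |a t s| ≤ abar := habar.2 ⟨(t, s), ⟨hs.1.le, hs.2, htT⟩, rfl⟩
      have hsz : |z s| ≤ Real.exp (μ * s) * N := hzN s ⟨hs.1.le, hs.2.trans htT⟩
      calc ‖a t s * z s‖ = |a t s| * |z s| := abs_mul _ _
        _ ≤ abar * (Real.exp (μ * s) * N) :=
            mul_le_mul hsa hsz (abs_nonneg _) habar0
        _ = abar * N * Real.exp (μ * s) := by ring
    have h := intervalIntegral.norm_integral_le_abs_of_norm_le hae hb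
    rwa [intervalIntegral.integral_const_mul, hE, abs_of_nonneg (by
      have : 0 ≤ (u - 1) / μ := div_nonneg (by linarith) hμ.le
      positivity)] at h
  -- bound for the double integral
  have hI2 : ‖∫ s in (0:ℝ)..t, ∫ σ in (0:ℝ)..t, b t s σ * z s * z σ‖ ≤
      bbar * N * N * ((u - 1) / μ) * ((u - 1) / μ) := by
    have hb : IntervalIntegrable
        (fun s => bbar * N * N * ((u - 1) / μ) * Real.exp (μ * s)) volume 0 t :=
      (Continuous.intervalIntegrable (by fun_prop) _ _)
    have hae : ∀ᵐ s ∂volume.restrict (Set.uIoc (0:ℝ) t),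
        ‖∫ σ in (0:ℝ)..t, b t s σ * z s * z σ‖ ≤
          bbar * N * N * ((u - 1) / μ) * Real.exp (μ * s) := by
      refine (ae_restrict_mem measurableSet_uIoc).mono fun s hs => ?_
      rw [hIoc] at hs
      have hsz : |z s| ≤ Real.exp (μ * s) * N := hzN s ⟨hs.1.le, hs.2.trans htT⟩
      have hbin : IntervalIntegrable
          (fun σ => bbar * N * Real.exp (μ * s) * N * Real.exp (μ * σ)) volume 0 t :=
        (Continuous.intervalIntegrable (by fun_prop) _ _)
      have haein : ∀ᵐ σ ∂volume.restrict (Set.uIoc (0:ℝ) t),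
          ‖b t s σ * z s * z σ‖ ≤ bbar * N * Real.exp (μ * s) * N * Real.exp (μ * σ) := by
        refine (ae_restrict_mem measurableSet_uIoc).mono fun σ hσ => ?_
        rw [hIoc] at hσ
        have hσz : |z σ| ≤ Real.exp (μ * σ) * N := hzN σ ⟨hσ.1.le, hσ.2.trans htT⟩
        have hsb : |b t s σ| ≤ bbar :=
          hbbar.2 ⟨(t, s, σ), ⟨hs.1.le, hs.2, hσ.1.le, hσ.2, htT⟩, rfl⟩
        calc ‖b t s σ * z s * z σ‖ = |b t s σ| * |z s| * |z σ| := by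
              simp only [Real.norm_eq_abs]; rw [abs_mul, abs_mul]
          _ ≤ bbar * (Real.exp (μ * s) * N) * (Real.exp (μ * σ) * N) := by
              apply mul_le_mul _ hσz (abs_nonneg _)
              · positivity
              · exact mul_le_mul hsb hsz (abs_nonneg _) hbbar0
          _ = bbar * N * Real.exp (μ * s) * N * Real.exp (μ * σ) := by ring
      have h := intervalIntegral.norm_integral_le_abs_of_norm_le haein hbin
      rw [intervalIntegral.integral_const_mul, hE] at h
      calc ‖∫ σ in (0:ℝ)..t, b t s σ * z s * z σ‖ ≤
            |bbar * N * Real.exp (μ * s) * N * ((u - 1) / μ)| := h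
        _ = bbar * N * Real.exp (μ * s) * N * ((u - 1) / μ) := abs_of_nonneg (by
            have : 0 ≤ (u - 1) / μ := div_nonneg (by linarith) hμ.le
            positivity)
        _ = bbar * N * N * ((u - 1) / μ) * Real.exp (μ * s) := by ring
    have h := intervalIntegral.norm_integral_le_abs_of_norm_le hae hb
    rwa [intervalIntegral.integral_const_mul, hE, abs_of_nonneg (by
      have : 0 ≤ (u - 1) / μ := div_nonneg (by linarith) hμ.le
      positivity)] at h
  -- assemble
  have habsS : |riccOp z₀ a b z t| ≤ |z₀ t| +
      ‖∫ s in (0:ℝ)..t, a t s * z s‖ +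
      (1/2) * ‖∫ s in (0:ℝ)..t, ∫ σ in (0:ℝ)..t, b t s σ * z s * z σ‖ := by
    rw [riccOp]
    refine (abs_add_le _ _).trans ?_
    have h1 := abs_add_le (z₀ t) (∫ s in (0:ℝ)..t, a t s * z s)
    have h2 : |(1/2 : ℝ) * ∫ s in (0:ℝ)..t, ∫ σ in (0:ℝ)..t, b t s σ * z s * z σ| =
        (1/2) * |∫ s in (0:ℝ)..t, ∫ σ in (0:ℝ)..t, b t s σ * z s * z σ| := by
      rw [abs_mul]; norm_num
    rw [h2]
    simp only [Real.norm_eq_abs]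
    linarith
  have hterm0 : Real.exp (-(μ * t)) * |z₀ t| ≤ W := le_csSup hbz₀ ⟨t, ⟨ht0, htT⟩, rfl⟩
  have hvT : Real.exp (-(μ * T)) ≤ u⁻¹ := by
    rw [← hvinv]
    exact Real.exp_le_exp.2 (by nlinarith)
  have hterm1 : u⁻¹ * (abar * N * ((u - 1) / μ)) ≤
      abar * ((1 - Real.exp (-(μ * T))) / μ) * N := by
    have heq : u⁻¹ * (abar * N * ((u - 1) / μ)) = abar * ((1 - u⁻¹) / μ) * N := by
      field_simp
      try ring
    rw [heq]
    gcongr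
    try linarith
  have hcosh : Real.cosh (μ * t) = (u + u⁻¹) / 2 := by
    rw [Real.cosh_eq, hudef, Real.exp_neg]
  have hterm2 : u⁻¹ * ((1/2) * (bbar * N * N * ((u - 1) / μ) * ((u - 1) / μ))) ≤
      bbar * ((Real.cosh (μ * T) - 1) / μ ^ 2) * N ^ 2 := by
    have heq : u⁻¹ * ((1/2) * (bbar * N * N * ((u - 1) / μ) * ((u - 1) / μ))) =
        bbar * ((Real.cosh (μ * t) - 1) / μ ^ 2) * N ^ 2 := by
      rw [hcosh]
      field_simp
      try ring
    rw [heq]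
    have hct : Real.cosh (μ * t) ≤ Real.cosh (μ * T) := by
      rw [Real.cosh_le_cosh, abs_of_nonneg (by positivity), abs_of_nonneg (by positivity)]
      exact mul_le_mul_of_nonneg_left htT hμ.le
    gcongr
    try linarith [Real.one_le_cosh (μ * t)]
  have hv0 : (0:ℝ) < u⁻¹ := by positivity
  calc Real.exp (-(μ * t)) * |riccOp z₀ a b z t|
      = u⁻¹ * |riccOp z₀ a b z t| := by rw [hvinv]
    _ ≤ u⁻¹ * (|z₀ t| + ‖∫ s in (0:ℝ)..t, a t s * z s‖ +
          (1/2) * ‖∫ s in (0:ℝ)..t, ∫ σ in (0:ℝ)..t, b t s σ * z s * z σ‖) :=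
        mul_le_mul_of_nonneg_left habsS hv0.le
    _ ≤ u⁻¹ * (|z₀ t| + abar * N * ((u - 1) / μ) +
          (1/2) * (bbar * N * N * ((u - 1) / μ) * ((u - 1) / μ))) := by
        apply mul_le_mul_of_nonneg_left _ hv0.le
        have h2 := mul_le_mul_of_nonneg_left hI2 (by norm_num : (0:ℝ) ≤ 1/2)
        linarith [hI1]
    _ = u⁻¹ * |z₀ t| + u⁻¹ * (abar * N * ((u - 1) / μ)) +
          u⁻¹ * ((1/2) * (bbar * N * N * ((u - 1) / μ) * ((u - 1) / μ))) := by ring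
    _ ≤ W + abar * ((1 - Real.exp (-(μ * T))) / μ) * N +
          bbar * ((Real.cosh (μ * T) - 1) / μ ^ 2) * N ^ 2 := by
        have h0 : u⁻¹ * |z₀ t| ≤ W := by rw [← hvinv]; exact hterm0
        linarith [hterm1, hterm2]
end

section
/- Let T > 0 and μ > 0, let z₀ ∈ C([0,T];ℝ), let a be continuous on D₁ = {(t,s) : 0 ≤ s ≤ t ≤ T} and b continuous on D₂ = {(t,s,σ) : 0 ≤ s ≤ t, 0 ≤ σ ≤ t, t ≤ T}, with ā := max|a|, b̄ := max|b|. Set c₀ := ‖z₀‖_μ, α := ā(1 − e^{−μT})/μ, β := b̄(cosh(μT) − 1)/μ², and let φ(ξ) := βξ² + (α − 1)ξ + c₀. Assume α < 1, c₀β ≤ (1/4)(α − 1)², and c₀ ≤ r̄, where r̄ is the largest real root of φ. Then the set M := {z ∈ C([0,T];ℝ) : ‖z‖_μ ≤ r̄} is invariant under the operator S, i.e. ‖z‖_μ ≤ r̄ implies ‖Sz‖_μ ≤ r̄, where (Sz)(t) := z₀(t) + ∫₀ᵗ a(t,s)z(s) ds + (1/2)∫₀ᵗ∫₀ᵗ b(t,s,σ)z(s)z(σ)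 ds dσ. -/
open MeasureTheory Set

set_option maxHeartbeats 1600000

lemma my_integral_exp_mul (c t : ℝ) (hc : c ≠ 0) :
    ∫ x in (0:ℝ)..t, Real.exp (c * x) = (Real.exp (c * t) - 1) / c := by
  have key : ∀ x ∈ uIcc (0:ℝ) t,
      HasDerivAt (fun y => Real.exp (c * y) / c) (Real.exp (c * x)) x := by
    intro x _
    have h1 : HasDerivAt (fun y : ℝ => c * y) c x := by
      simpa using (hasDerivAt_id x).const_mul c
    have h2 := (Real.hasDerivAt_exp (c * x)).comp x h1
    have h3 := h2.div_const c
    simpa [mul_div_assoc, mul_div_cancel_right₀, hc] using h3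
  have := intervalIntegral.integral_eq_sub_of_hasDerivAt key
    ((Real.continuous_exp.comp (continuous_const.mul continuous_id)).intervalIntegrable 0 t)
  simpa [sub_div] using this

/-- (Lemma 6.1) Under the root conditions on the trinomial
`φ(ξ) = βξ² + (α−1)ξ + c₀`, the ball `M = {z : ‖z‖_μ ≤ r̄}` is invariant under `S`. -/
theorem riccati_volterra_invariant_ball
    (T μ : ℝ) (hT : 0 < T) (hμ : 0 < μ)
    (z₀ : ℝ → ℝ) (hz₀ : ContinuousOn z₀ (Icc 0 T))
    (a : ℝ → ℝ → ℝ)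
    (hacont : ContinuousOn (fun p : ℝ × ℝ => a p.1 p.2)
      {p : ℝ × ℝ | 0 ≤ p.2 ∧ p.2 ≤ p.1 ∧ p.1 ≤ T})
    (b : ℝ → ℝ → ℝ → ℝ)
    (hbcont : ContinuousOn (fun p : ℝ × ℝ × ℝ => b p.1 p.2.1 p.2.2)
      {p : ℝ × ℝ × ℝ | 0 ≤ p.2.1 ∧ p.2.1 ≤ p.1 ∧ 0 ≤ p.2.2 ∧ p.2.2 ≤ p.1 ∧ p.1 ≤ T})
    (abar : ℝ)
    (habar : IsGreatest ((fun p : ℝ × ℝ => |a p.1 p.2|) ''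
      {p : ℝ × ℝ | 0 ≤ p.2 ∧ p.2 ≤ p.1 ∧ p.1 ≤ T}) abar)
    (bbar : ℝ)
    (hbbar : IsGreatest ((fun p : ℝ × ℝ × ℝ => |b p.1 p.2.1 p.2.2|) ''
      {p : ℝ × ℝ × ℝ | 0 ≤ p.2.1 ∧ p.2.1 ≤ p.1 ∧ 0 ≤ p.2.2 ∧ p.2.2 ≤ p.1 ∧ p.1 ≤ T}) bbar)
    (c₀ α β : ℝ)
    (hc₀ : c₀ = wnorm μ T z₀)
    (hα : α = abar * ((1 - Real.exp (-(μ * T))) / μ))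
    (hβ : β = bbar * ((Real.cosh (μ * T) - 1) / μ ^ 2))
    (rbar : ℝ)
    (hroot : β * rbar ^ 2 + (α - 1) * rbar + c₀ = 0)
    (hlargest : ∀ ξ : ℝ, β * ξ ^ 2 + (α - 1) * ξ + c₀ = 0 → ξ ≤ rbar)
    (hαlt : α < 1) (hdisc : c₀ * β ≤ (1/4) * (α - 1) ^ 2) (hc₀le : c₀ ≤ rbar) :
    ∀ z : ℝ → ℝ, ContinuousOn z (Icc 0 T) → wnorm μ T z ≤ rbar →
      wnorm μ T (riccOp z₀ a b z) ≤ rbar := by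
  intro z hz hzr
  have hT0 : (0:ℝ) ≤ T := hT.le
  -- nonnegativity of the bars
  obtain ⟨p, _, hpe⟩ := habar.1
  have habar0 : 0 ≤ abar := hpe ▸ abs_nonneg _
  obtain ⟨q, _, hqe⟩ := hbbar.1
  have hbbar0 : 0 ≤ bbar := hqe ▸ abs_nonneg _
  -- bounds for z₀
  have hcontw : ContinuousOn (fun t => Real.exp (-(μ * t)) * |z₀ t|) (Icc 0 T) := by
    exact ((Real.continuous_exp.comp (continuous_const.mul continuous_id).neg).continuousOn).mul
      hz₀.abs
  have hbdd0 : BddAbove ((fun t => Real.exp (-(μ * t)) * |z₀ t|) '' Icc 0 T) :=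
    (isCompact_Icc.image_of_continuousOn hcontw).bddAbove
  have hmem0 : ∀ t ∈ Icc (0:ℝ) T, Real.exp (-(μ * t)) * |z₀ t| ≤ c₀ := by
    intro t ht
    rw [hc₀]
    exact le_csSup hbdd0 ⟨t, ht, rfl⟩
  have hc₀0 : 0 ≤ c₀ :=
    le_trans (by positivity) (hmem0 0 ⟨le_rfl, hT0⟩)
  have hrbar0 : 0 ≤ rbar := hc₀0.trans hc₀le
  -- bounds for z
  set r := wnorm μ T z with hrdef
  have hcontz : ContinuousOn (fun t => Real.exp (-(μ * t)) * |z t|) (Icc 0 T) := by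
    exact ((Real.continuous_exp.comp (continuous_const.mul continuous_id).neg).continuousOn).mul
      hz.abs
  have hbddz : BddAbove ((fun t => Real.exp (-(μ * t)) * |z t|) '' Icc 0 T) :=
    (isCompact_Icc.image_of_continuousOn hcontz).bddAbove
  have hmemz : ∀ t ∈ Icc (0:ℝ) T, Real.exp (-(μ * t)) * |z t| ≤ r := by
    intro t ht
    exact le_csSup hbddz ⟨t, ht, rfl⟩
  have hr0 : 0 ≤ r := le_trans (by positivity) (hmemz 0 ⟨le_rfl, hT0⟩)
  have hzb : ∀ s ∈ Icc (0:ℝ) T, |z s| ≤ r * Real.exp (μ * s) := by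
    intro s hs
    have h1 := hmemz s hs
    have h2 : Real.exp (μ * s) * Real.exp (-(μ * s)) = 1 := by
      rw [← Real.exp_add]; simp
    nlinarith [Real.exp_pos (μ * s), abs_nonneg (z s)]
  -- main estimate
  rw [wnorm]
  apply Real.sSup_le _ hrbar0
  rintro x ⟨t, ⟨ht0, htT⟩, rfl⟩
  have hEt1 : (1:ℝ) ≤ Real.exp (μ * t) := Real.one_le_exp (by positivity)
  set I1 := ∫ s in (0:ℝ)..t, a t s * z s with hI1
  set I2 := ∫ s in (0:ℝ)..t, ∫ σ in (0:ℝ)..t, b t s σ * z s * z σ with hI2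
  -- bound on the single integral
  have hIA : |I1| ≤ abar * r * ((Real.exp (μ * t) - 1) / μ) := by
    have hb : ∀ s ∈ Set.uIoc (0:ℝ) t, ‖a t s * z s‖ ≤ (abar * r) * Real.exp (μ * s) := by
      intro s hs
      rw [uIoc_of_le ht0] at hs
      have hsI : s ∈ Icc (0:ℝ) T := ⟨hs.1.le, hs.2.trans htT⟩
      have ha : |a t s| ≤ abar := habar.2 ⟨(t, s), ⟨hs.1.le, hs.2, htT⟩, rfl⟩
      have hzs := hzb s hsI
      rw [Real.norm_eq_abs, abs_mul]
      calc |a t s| * |z s| ≤ abar * (r * Real.exp (μ * s)) :=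
            mul_le_mul ha hzs (abs_nonneg _) habar0
        _ = (abar * r) * Real.exp (μ * s) := by ring
    have hint : IntervalIntegrable (fun s => (abar * r) * Real.exp (μ * s)) volume 0 t :=
      (continuous_const.mul
        (Real.continuous_exp.comp (continuous_const.mul continuous_id))).intervalIntegrable 0 t
    have hkey := intervalIntegral.norm_integral_le_abs_of_norm_le
      (Filter.eventually_of_mem (self_mem_ae_restrict measurableSet_uIoc) hb) hint
    rw [intervalIntegral.integral_const_mul, my_integral_exp_mul μ t hμ.ne'] at hkey
    have hnn : 0 ≤ abar * r * ((Real.exp (μ * t) - 1) / μ) :=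
      mul_nonneg (mul_nonneg habar0 hr0) (div_nonneg (by linarith) hμ.le)
    calc |I1| ≤ |abar * r * ((Real.exp (μ * t) - 1) / μ)| := hkey
      _ = abar * r * ((Real.exp (μ * t) - 1) / μ) := abs_of_nonneg hnn
  -- bound on the double integral
  have hIB : |I2| ≤ bbar * (r * ((Real.exp (μ * t) - 1) / μ)) ^ 2 := by
    have hbout : ∀ s ∈ Set.uIoc (0:ℝ) t,
        ‖∫ σ in (0:ℝ)..t, b t s σ * z s * z σ‖ ≤
          (bbar * r * ((Real.exp (μ * t) - 1) / μ) * r) * Real.exp (μ * s) := by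
      intro s hs
      rw [uIoc_of_le ht0] at hs
      have hsI : s ∈ Icc (0:ℝ) T := ⟨hs.1.le, hs.2.trans htT⟩
      have hzs := hzb s hsI
      have hbin : ∀ σ ∈ Set.uIoc (0:ℝ) t,
          ‖b t s σ * z s * z σ‖ ≤ (bbar * (r * Real.exp (μ * s)) * r) * Real.exp (μ * σ) := by
        intro σ hσ
        rw [uIoc_of_le ht0] at hσ
        have hσI : σ ∈ Icc (0:ℝ) T := ⟨hσ.1.le, hσ.2.trans htT⟩
        have hzσ := hzb σ hσI
        have hbb : |b t s σ| ≤ bbar :=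
          hbbar.2 ⟨(t, s, σ), ⟨hs.1.le, hs.2, hσ.1.le, hσ.2, htT⟩, rfl⟩
        rw [Real.norm_eq_abs, abs_mul, abs_mul]
        have hzsnn : (0:ℝ) ≤ r * Real.exp (μ * s) := by positivity
        calc |b t s σ| * |z s| * |z σ|
            ≤ (bbar * (r * Real.exp (μ * s))) * (r * Real.exp (μ * σ)) :=
              mul_le_mul (mul_le_mul hbb hzs (abs_nonneg _) hbbar0) hzσ (abs_nonneg _)
                (mul_nonneg hbbar0 hzsnn)
          _ = (bbar * (r * Real.exp (μ * s)) * r) * Real.exp (μ * σ) := by ring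
      have hint : IntervalIntegrable
          (fun σ => (bbar * (r * Real.exp (μ * s)) * r) * Real.exp (μ * σ)) volume 0 t :=
        (continuous_const.mul
          (Real.continuous_exp.comp (continuous_const.mul continuous_id))).intervalIntegrable 0 t
      have hkey := intervalIntegral.norm_integral_le_abs_of_norm_le
        (Filter.eventually_of_mem (self_mem_ae_restrict measurableSet_uIoc) hbin) hint
      rw [intervalIntegral.integral_const_mul, my_integral_exp_mul μ t hμ.ne'] at hkey
      have hnn : 0 ≤ (bbar * (r * Real.exp (μ * s)) * r) * ((Real.exp (μ * t) - 1) / μ) := by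
        have : (0:ℝ) ≤ (Real.exp (μ * t) - 1) / μ := div_nonneg (by linarith) hμ.le
        have : (0:ℝ) ≤ bbar * (r * Real.exp (μ * s)) * r := by positivity
        nlinarith [div_nonneg (by linarith [hEt1] : (0:ℝ) ≤ Real.exp (μ * t) - 1) hμ.le]
      calc ‖∫ σ in (0:ℝ)..t, b t s σ * z s * z σ‖
          ≤ |(bbar * (r * Real.exp (μ * s)) * r) * ((Real.exp (μ * t) - 1) / μ)| := hkey
        _ = (bbar * (r * Real.exp (μ * s)) * r) * ((Real.exp (μ * t) - 1) / μ) :=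
            abs_of_nonneg hnn
        _ = (bbar * r * ((Real.exp (μ * t) - 1) / μ) * r) * Real.exp (μ * s) := by ring
    have hint : IntervalIntegrable
        (fun s => (bbar * r * ((Real.exp (μ * t) - 1) / μ) * r) * Real.exp (μ * s)) volume 0 t :=
      (continuous_const.mul
        (Real.continuous_exp.comp (continuous_const.mul continuous_id))).intervalIntegrable 0 t
    have hkey := intervalIntegral.norm_integral_le_abs_of_norm_le
      (Filter.eventually_of_mem (self_mem_ae_restrict measurableSet_uIoc) hbout) hint
    rw [intervalIntegral.integral_const_mul, my_integral_exp_mul μ t hμ.ne'] at hkey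
    have hEtdiv : (0:ℝ) ≤ (Real.exp (μ * t) - 1) / μ := div_nonneg (by linarith) hμ.le
    have hnn : 0 ≤ (bbar * r * ((Real.exp (μ * t) - 1) / μ) * r) *
        ((Real.exp (μ * t) - 1) / μ) :=
      mul_nonneg (mul_nonneg (mul_nonneg (mul_nonneg hbbar0 hr0) hEtdiv) hr0) hEtdiv
    calc |I2| ≤ |(bbar * r * ((Real.exp (μ * t) - 1) / μ) * r) *
          ((Real.exp (μ * t) - 1) / μ)| := hkey
      _ = (bbar * r * ((Real.exp (μ * t) - 1) / μ) * r) *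
          ((Real.exp (μ * t) - 1) / μ) := abs_of_nonneg hnn
      _ = bbar * (r * ((Real.exp (μ * t) - 1) / μ)) ^ 2 := by ring
  -- triangle inequality
  have habs : |riccOp z₀ a b z t| ≤ |z₀ t| + |I1| + (1/2) * |I2| := by
    have h1 := abs_add_le (z₀ t + I1) ((1/2 : ℝ) * I2)
    have h2 := abs_add_le (z₀ t) I1
    have h3 : |(1/2 : ℝ) * I2| = (1/2) * |I2| := by rw [abs_mul]; norm_num
    simp only [riccOp, ← hI1, ← hI2]
    linarith
  -- putting things together
  have hexp0 : (0:ℝ) < Real.exp (-(μ * t)) := Real.exp_pos _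
  have huv : Real.exp (μ * t) * Real.exp (-(μ * t)) = 1 := by rw [← Real.exp_add]; simp
  -- term 2 estimate
  have hterm2 : Real.exp (-(μ * t)) * (abar * r * ((Real.exp (μ * t) - 1) / μ)) ≤ α * rbar := by
    have heq : Real.exp (-(μ * t)) * (abar * r * ((Real.exp (μ * t) - 1) / μ)) =
        abar * r * ((1 - Real.exp (-(μ * t))) / μ) := by
      field_simp
      linear_combination abar * r * huv
    rw [heq, hα]
    have hmono : Real.exp (-(μ * T)) ≤ Real.exp (-(μ * t)) := by
      apply Real.exp_le_exp.mpr
      nlinarith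
    have h1 : 0 ≤ 1 - Real.exp (-(μ * t)) := by
      have : Real.exp (-(μ * t)) ≤ 1 := Real.exp_le_one_iff.mpr (neg_nonpos.mpr (mul_nonneg hμ.le ht0))
      linarith
    have h2 : 0 ≤ 1 - Real.exp (-(μ * T)) := by linarith
    calc abar * r * ((1 - Real.exp (-(μ * t))) / μ)
        ≤ (abar * rbar) * ((1 - Real.exp (-(μ * T))) / μ) := by
          apply mul_le_mul (mul_le_mul_of_nonneg_left hzr habar0)
            (div_le_div_of_nonneg_right (by linarith) hμ.le) ?_ ?_
          · exact div_nonneg h1 hμ.le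
          · exact mul_nonneg habar0 hrbar0
      _ = abar * ((1 - Real.exp (-(μ * T))) / μ) * rbar := by ring
  -- term 3 estimate
  have hterm3 : Real.exp (-(μ * t)) * ((1/2) * (bbar * (r * ((Real.exp (μ * t) - 1) / μ)) ^ 2))
      ≤ β * rbar ^ 2 := by
    have hid : Real.exp (-(μ * t)) * (Real.exp (μ * t) - 1) ^ 2 =
        2 * (Real.cosh (μ * t) - 1) := by
      rw [Real.cosh_eq]
      linear_combination (Real.exp (μ * t) - 2) * huv
    have heq : Real.exp (-(μ * t)) * ((1/2) * (bbar * (r * ((Real.exp (μ * t) - 1) / μ)) ^ 2)) =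
        bbar * r ^ 2 * ((Real.cosh (μ * t) - 1) / μ ^ 2) := by
      have h' : Real.exp (-(μ * t)) * ((1/2) * (bbar * (r * ((Real.exp (μ * t) - 1) / μ)) ^ 2)) =
          bbar * r ^ 2 * ((Real.exp (-(μ * t)) * (Real.exp (μ * t) - 1) ^ 2) / 2 / μ ^ 2) := by
        ring
      rw [h', hid]
      ring
    rw [heq, hβ]
    have hcosh : Real.cosh (μ * t) ≤ Real.cosh (μ * T) := by
      apply Real.cosh_le_cosh.mpr
      rw [abs_of_nonneg (by positivity : (0:ℝ) ≤ μ * t),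
        abs_of_nonneg (by positivity : (0:ℝ) ≤ μ * T)]
      nlinarith
    have hcosh1 : 1 ≤ Real.cosh (μ * t) := Real.one_le_cosh _
    have hμ2 : (0:ℝ) < μ ^ 2 := by positivity
    calc bbar * r ^ 2 * ((Real.cosh (μ * t) - 1) / μ ^ 2)
        ≤ (bbar * rbar ^ 2) * ((Real.cosh (μ * T) - 1) / μ ^ 2) := by
          apply mul_le_mul
            (mul_le_mul_of_nonneg_left (pow_le_pow_left₀ hr0 hzr 2) hbbar0)
            (div_le_div_of_nonneg_right (by linarith) hμ2.le)
            (div_nonneg (by linarith) hμ2.le)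
            (mul_nonneg hbbar0 (sq_nonneg rbar))
      _ = bbar * ((Real.cosh (μ * T) - 1) / μ ^ 2) * rbar ^ 2 := by ring
  have hterm1 : Real.exp (-(μ * t)) * |z₀ t| ≤ c₀ := hmem0 t ⟨ht0, htT⟩
  have hchain : Real.exp (-(μ * t)) * |riccOp z₀ a b z t| ≤ c₀ + α * rbar + β * rbar ^ 2 := by
    have h4 : Real.exp (-(μ * t)) * |riccOp z₀ a b z t| ≤
        Real.exp (-(μ * t)) * (|z₀ t| + |I1| + (1/2) * |I2|) :=
      mul_le_mul_of_nonneg_left habs hexp0.le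
    have h5 : Real.exp (-(μ * t)) * |I1| ≤
        Real.exp (-(μ * t)) * (abar * r * ((Real.exp (μ * t) - 1) / μ)) :=
      mul_le_mul_of_nonneg_left hIA hexp0.le
    have h6 : Real.exp (-(μ * t)) * ((1/2) * |I2|) ≤
        Real.exp (-(μ * t)) * ((1/2) * (bbar * (r * ((Real.exp (μ * t) - 1) / μ)) ^ 2)) := by
      apply mul_le_mul_of_nonneg_left _ hexp0.le
      linarith
    have h7 : Real.exp (-(μ * t)) * (|z₀ t| + |I1| + (1/2) * |I2|) =
        Real.exp (-(μ * t)) * |z₀ t| + Real.exp (-(μ * t)) * |I1| +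
          Real.exp (-(μ * t)) * ((1/2) * |I2|) := by ring
    linarith
  show Real.exp (-(μ * t)) * |riccOp z₀ a b z t| ≤ rbar
  linarith [hchain, hroot]
end

section
/- Let T > 0 and μ > 0, let z₀ ∈ C([0,T];ℝ), let a be continuous on D₁ = {(t,s) : 0 ≤ s ≤ t ≤ T} and b continuous on D₂ = {(t,s,σ) : 0 ≤ s ≤ t, 0 ≤ σ ≤ t, t ≤ T}, with ā := max|a|, b̄ := max|b|. Set c₀ := ‖z₀‖_μ, α := ā(1 − e^{−μT})/μ, β := b̄(cosh(μT) − 1)/μ², and let φ(ξ) := βξ² + (α − 1)ξ + c₀ with largest real root r̄. Assume α < 1, c₀β ≤ (1/4)(α − 1)², and c₀ ≤ r̄. Then the scalar Riccati–Volterra integral equation z(t) = z₀(t) + ∫₀ᵗ a(t,s)z(s) ds + (1/2)∫₀ᵗ∫₀ᵗ b(t,s,σ)z(s)z(σ) ds dσ has a unique solution z ∈ C([0,T];ℝ) with ‖z‖_μ ≤ r̄. -/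
open MeasureTheory Set

namespace RV

noncomputable def I1 (A : ℝ → ℝ → ℝ) (u : ℝ → ℝ) (t : ℝ) : ℝ :=
  ∫ s in (0:ℝ)..t, A t s * u s

noncomputable def I2 (B : ℝ → ℝ → ℝ → ℝ) (u : ℝ → ℝ) (t : ℝ) : ℝ :=
  ∫ s in (0:ℝ)..t, ∫ σ in (0:ℝ)..t, B t s σ * u s * u σ

noncomputable def Phi (Z : ℝ → ℝ) (A : ℝ → ℝ → ℝ) (B : ℝ → ℝ → ℝ → ℝ)
    (u : ℝ → ℝ) (t : ℝ) : ℝ :=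
  Z t + I1 A u t + (1/2) * I2 B u t

lemma cont_inner {B : ℝ → ℝ → ℝ → ℝ} {u : ℝ → ℝ}
    (hB : Continuous (fun p : ℝ × ℝ × ℝ => B p.1 p.2.1 p.2.2)) (hu : Continuous u) :
    Continuous (fun p : ℝ × ℝ => ∫ σ in (0:ℝ)..p.1, B p.1 p.2 σ * u p.2 * u σ) := by
  have h : Continuous (Function.uncurry fun (p : ℝ × ℝ) (σ : ℝ) =>
      B p.1 p.2 σ * u p.2 * u σ) := by
    have h1 : Continuous fun q : (ℝ × ℝ) × ℝ => B q.1.1 q.1.2 q.2 :=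
      hB.comp (f := fun q : (ℝ × ℝ) × ℝ => (q.1.1, q.1.2, q.2)) (by fun_prop)
    exact (h1.mul (hu.comp (continuous_snd.comp continuous_fst))).mul (hu.comp continuous_snd)
  exact intervalIntegral.continuous_parametric_intervalIntegral_of_continuous h continuous_fst

lemma cont_I1 {A : ℝ → ℝ → ℝ} {u : ℝ → ℝ}
    (hA : Continuous (fun p : ℝ × ℝ => A p.1 p.2)) (hu : Continuous u) :
    Continuous (I1 A u) := by
  have h : Continuous (Function.uncurry fun (t s : ℝ) => A t s * u s) := by
    apply Continuous.mul
    · exact hA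
    · fun_prop
  exact intervalIntegral.continuous_parametric_intervalIntegral_of_continuous h continuous_id

lemma cont_I2 {B : ℝ → ℝ → ℝ → ℝ} {u : ℝ → ℝ}
    (hB : Continuous (fun p : ℝ × ℝ × ℝ => B p.1 p.2.1 p.2.2)) (hu : Continuous u) :
    Continuous (I2 B u) := by
  have hG := cont_inner hB hu
  have h : Continuous (Function.uncurry fun (t s : ℝ) =>
      ∫ σ in (0:ℝ)..t, B t s σ * u s * u σ) := hG
  exact intervalIntegral.continuous_parametric_intervalIntegral_of_continuous h continuous_id

lemma cont_Phi {Z : ℝ → ℝ} {A : ℝ → ℝ → ℝ} {B : ℝ → ℝ → ℝ → ℝ} {u : ℝ → ℝ}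
    (hZ : Continuous Z) (hA : Continuous (fun p : ℝ × ℝ => A p.1 p.2))
    (hB : Continuous (fun p : ℝ × ℝ × ℝ => B p.1 p.2.1 p.2.2)) (hu : Continuous u) :
    Continuous (Phi Z A B u) := by
  unfold Phi
  exact ((hZ.add (cont_I1 hA hu)).add (continuous_const.mul (cont_I2 hB hu)))

lemma Phi_zero (Z : ℝ → ℝ) (A : ℝ → ℝ → ℝ) (B : ℝ → ℝ → ℝ → ℝ) (t : ℝ) :
    Phi Z A B (fun _ => 0) t = Z t := by
  simp [Phi, I1, I2]

lemma integral_exp_mu {μ : ℝ} (hμ : 0 < μ) (t : ℝ) :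
    ∫ s in (0:ℝ)..t, Real.exp (μ * s) = (Real.exp (μ * t) - 1) / μ := by
  have h := intervalIntegral.integral_comp_mul_left (a := (0:ℝ)) (b := t)
    (fun x => Real.exp x) hμ.ne'
  simp only [mul_zero, integral_exp, Real.exp_zero, smul_eq_mul] at h
  rw [h]
  field_simp

lemma w1 {μ T t : ℝ} (hμ : 0 < μ) (ht0 : 0 ≤ t) (htT : t ≤ T) :
    Real.exp (-(μ * t)) * ((Real.exp (μ * t) - 1) / μ) ≤ (1 - Real.exp (-(μ * T))) / μ := by
  have hx := Real.exp_pos (μ * t)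
  have e1 : Real.exp (-(μ * t)) * ((Real.exp (μ * t) - 1) / μ) =
      (1 - Real.exp (-(μ * t))) / μ := by
    rw [Real.exp_neg]
    field_simp
  rw [e1]
  have h2 : Real.exp (-(μ * T)) ≤ Real.exp (-(μ * t)) := Real.exp_le_exp.2 (by nlinarith)
  exact (div_le_div_iff_of_pos_right hμ).2 (by linarith)

lemma w2 {μ T t : ℝ} (hμ : 0 < μ) (ht0 : 0 ≤ t) (htT : t ≤ T) :
    Real.exp (-(μ * t)) * ((Real.exp (μ * t) - 1) / μ) ^ 2 ≤
      2 * (Real.cosh (μ * T) - 1) / μ ^ 2 := by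
  have hx := Real.exp_pos (μ * t)
  have e1 : Real.exp (-(μ * t)) * ((Real.exp (μ * t) - 1) / μ) ^ 2 =
      (2 * Real.cosh (μ * t) - 2) / μ ^ 2 := by
    rw [Real.cosh_eq, Real.exp_neg]
    field_simp
    ring
  rw [e1]
  have hc : Real.cosh (μ * t) ≤ Real.cosh (μ * T) := by
    rw [Real.cosh_le_cosh]
    rw [abs_of_nonneg (mul_nonneg hμ.le ht0), abs_of_nonneg (mul_nonneg hμ.le (ht0.trans htT))]
    nlinarith
  have hμ2 : (0:ℝ) < μ ^ 2 := by positivity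
  exact (div_le_div_iff_of_pos_right hμ2).2 (by linarith)

lemma est {μ T abar bbar p q d : ℝ} {A : ℝ → ℝ → ℝ} {B : ℝ → ℝ → ℝ → ℝ} {u v : ℝ → ℝ}
    (hμ : 0 < μ) (hA : Continuous (fun p : ℝ × ℝ => A p.1 p.2))
    (hB : Continuous (fun p : ℝ × ℝ × ℝ => B p.1 p.2.1 p.2.2))
    (hu : Continuous u) (hv : Continuous v)
    (hAbd : ∀ t s : ℝ, 0 ≤ s → s ≤ t → t ≤ T → |A t s| ≤ abar)
    (hBbd : ∀ t s σ : ℝ, 0 ≤ s → s ≤ t → 0 ≤ σ → σ ≤ t → t ≤ T → |B t s σ| ≤ bbar)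
    (hp : 0 ≤ p) (hq : 0 ≤ q) (hd : 0 ≤ d)
    (hup : ∀ s ∈ Icc (0:ℝ) T, |u s| ≤ p * Real.exp (μ * s))
    (hvq : ∀ s ∈ Icc (0:ℝ) T, |v s| ≤ q * Real.exp (μ * s))
    (huv : ∀ s ∈ Icc (0:ℝ) T, |u s - v s| ≤ d * Real.exp (μ * s))
    (Z : ℝ → ℝ) {t : ℝ} (ht : t ∈ Icc (0:ℝ) T) :
    Real.exp (-(μ * t)) * |Phi Z A B u t - Phi Z A B v t| ≤
      (abar * ((1 - Real.exp (-(μ * T))) / μ) +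
        bbar * ((Real.cosh (μ * T) - 1) / μ ^ 2) * (p + q)) * d := by
  obtain ⟨ht0, htT⟩ := ht
  have h0T : (0:ℝ) ≤ T := ht0.trans htT
  set E : ℝ := (Real.exp (μ * t) - 1) / μ with hEdef
  have hE0 : 0 ≤ E := by
    rw [hEdef]
    have h1 : (1:ℝ) ≤ Real.exp (μ * t) := Real.one_le_exp (by positivity)
    exact div_nonneg (by linarith) hμ.le
  have habar0 : 0 ≤ abar := le_trans (abs_nonneg _) (hAbd 0 0 le_rfl le_rfl h0T)
  have hbbar0 : 0 ≤ bbar := le_trans (abs_nonneg _) (hBbd 0 0 0 le_rfl le_rfl le_rfl le_rfl h0T)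
  have hsub : ∀ s ∈ Icc (0:ℝ) t, s ∈ Icc (0:ℝ) T := fun s hs => ⟨hs.1, hs.2.trans htT⟩
  -- continuity of integrands
  have hcu : Continuous fun s => A t s * u s :=
    ((hA.comp (by fun_prop : Continuous fun s : ℝ => (t, s))).mul hu)
  have hcv : Continuous fun s => A t s * v s :=
    ((hA.comp (by fun_prop : Continuous fun s : ℝ => (t, s))).mul hv)
  -- linear part
  have keyA : |I1 A u t - I1 A v t| ≤ abar * d * E := by
    have h1 : I1 A u t - I1 A v t = ∫ s in (0:ℝ)..t, A t s * (u s - v s) := by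
      rw [I1, I1, ← intervalIntegral.integral_sub (hcu.intervalIntegrable 0 t)
        (hcv.intervalIntegrable 0 t)]
      congr 1
      ext s
      ring
    rw [h1]
    calc |∫ s in (0:ℝ)..t, A t s * (u s - v s)|
        ≤ ∫ s in (0:ℝ)..t, |A t s * (u s - v s)| :=
          intervalIntegral.abs_integral_le_integral_abs ht0
      _ ≤ ∫ s in (0:ℝ)..t, abar * d * Real.exp (μ * s) := by
          apply intervalIntegral.integral_mono_on ht0
          · exact (((hA.comp (by fun_prop : Continuous fun s : ℝ => (t, s))).mul
              (hu.sub hv)).abs.intervalIntegrable 0 t)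
          · exact ((continuous_const.mul (Real.continuous_exp.comp
              (continuous_const.mul continuous_id))).intervalIntegrable 0 t)
          · intro s hs
            rw [abs_mul]
            have := mul_le_mul (hAbd t s hs.1 hs.2 htT) (huv s (hsub s hs))
              (abs_nonneg _) habar0
            calc |A t s| * |u s - v s| ≤ abar * (d * Real.exp (μ * s)) := this
              _ = abar * d * Real.exp (μ * s) := by ring
      _ = abar * d * E := by
          rw [intervalIntegral.integral_const_mul, integral_exp_mu hμ]
  -- quadratic part
  set fu : ℝ → ℝ := fun s => ∫ σ in (0:ℝ)..t, B t s σ * u s * u σ with hfudef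
  set fv : ℝ → ℝ := fun s => ∫ σ in (0:ℝ)..t, B t s σ * v s * v σ with hfvdef
  have hBc : ∀ (w : ℝ → ℝ), Continuous w → Continuous (Function.uncurry fun (s σ : ℝ) =>
      B t s σ * w s * w σ) := by
    intro w hw
    have h1 : Continuous fun z : ℝ × ℝ => B t z.1 z.2 :=
      hB.comp (f := fun z : ℝ × ℝ => (t, z.1, z.2)) (by fun_prop)
    exact (h1.mul (hw.comp continuous_fst)).mul (hw.comp continuous_snd)
  have hfu_cont : Continuous fu :=
    intervalIntegral.continuous_parametric_intervalIntegral_of_continuous'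
      (hBc u hu) 0 t
  have hfv_cont : Continuous fv :=
    intervalIntegral.continuous_parametric_intervalIntegral_of_continuous'
      (hBc v hv) 0 t
  have key_inner : ∀ s ∈ Icc (0:ℝ) t,
      |fu s - fv s| ≤ bbar * ((p + q) * d) * Real.exp (μ * s) * E := by
    intro s hs
    have hsT := hsub s hs
    have hc1 : Continuous fun σ => B t s σ * u s * u σ :=
      ((hB.comp (f := fun σ : ℝ => (t, s, σ)) (by fun_prop)).mul continuous_const).mul hu
    have hc2 : Continuous fun σ => B t s σ * v s * v σ :=
      ((hB.comp (f := fun σ : ℝ => (t, s, σ)) (by fun_prop)).mul continuous_const).mul hv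
    have h2 : fu s - fv s =
        ∫ σ in (0:ℝ)..t, (B t s σ * u s * u σ - B t s σ * v s * v σ) := by
      rw [hfudef, hfvdef]
      rw [← intervalIntegral.integral_sub (hc1.intervalIntegrable 0 t)
        (hc2.intervalIntegrable 0 t)]
    rw [h2]
    calc |∫ σ in (0:ℝ)..t, (B t s σ * u s * u σ - B t s σ * v s * v σ)|
        ≤ ∫ σ in (0:ℝ)..t, |B t s σ * u s * u σ - B t s σ * v s * v σ| :=
          intervalIntegral.abs_integral_le_integral_abs ht0
      _ ≤ ∫ σ in (0:ℝ)..t, (bbar * ((p + q) * d) * Real.exp (μ * s)) * Real.exp (μ * σ) := by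
          apply intervalIntegral.integral_mono_on ht0
          · exact ((hc1.sub hc2).abs.intervalIntegrable 0 t)
          · exact ((continuous_const.mul (Real.continuous_exp.comp
              (continuous_const.mul continuous_id))).intervalIntegrable 0 t)
          · intro σ hσ
            have hσT := hsub σ hσ
            have e2 : B t s σ * u s * u σ - B t s σ * v s * v σ =
                B t s σ * (u s * u σ - v s * v σ) := by ring
            rw [e2, abs_mul]
            have hprod : |u s * u σ - v s * v σ| ≤
                (p + q) * d * (Real.exp (μ * s) * Real.exp (μ * σ)) := by
              have e3 : u s * u σ - v s * v σ = u s * (u σ - v σ) + (u s - v s) * v σ := by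
                ring
              rw [e3]
              have h4 := abs_add_le (u s * (u σ - v σ)) ((u s - v s) * v σ)
              rw [abs_mul, abs_mul] at h4
              have h5 := mul_le_mul (hup s hsT) (huv σ hσT) (abs_nonneg _)
                (by positivity)
              have h6 := mul_le_mul (huv s hsT) (hvq σ hσT) (abs_nonneg _)
                (by positivity)
              calc |u s * (u σ - v σ) + (u s - v s) * v σ|
                  ≤ |u s| * |u σ - v σ| + |u s - v s| * |v σ| := h4
                _ ≤ p * Real.exp (μ * s) * (d * Real.exp (μ * σ)) +
                    d * Real.exp (μ * s) * (q * Real.exp (μ * σ)) := by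
                    exact add_le_add h5 h6
                _ = (p + q) * d * (Real.exp (μ * s) * Real.exp (μ * σ)) := by ring
            have h7 := mul_le_mul (hBbd t s σ hs.1 hs.2 hσ.1 hσ.2 htT) hprod
              (abs_nonneg _) hbbar0
            calc |B t s σ| * |u s * u σ - v s * v σ|
                ≤ bbar * ((p + q) * d * (Real.exp (μ * s) * Real.exp (μ * σ))) := h7
              _ = bbar * ((p + q) * d) * Real.exp (μ * s) * Real.exp (μ * σ) := by ring
      _ = bbar * ((p + q) * d) * Real.exp (μ * s) * E := by
          rw [intervalIntegral.integral_const_mul, integral_exp_mu hμ]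
  have keyB : |I2 B u t - I2 B v t| ≤ bbar * ((p + q) * d) * E ^ 2 := by
    have h3 : I2 B u t - I2 B v t = ∫ s in (0:ℝ)..t, (fu s - fv s) := by
      rw [I2, I2, ← intervalIntegral.integral_sub (hfu_cont.intervalIntegrable 0 t)
        (hfv_cont.intervalIntegrable 0 t)]
    rw [h3]
    calc |∫ s in (0:ℝ)..t, (fu s - fv s)|
        ≤ ∫ s in (0:ℝ)..t, |fu s - fv s| :=
          intervalIntegral.abs_integral_le_integral_abs ht0
      _ ≤ ∫ s in (0:ℝ)..t, (bbar * ((p + q) * d) * E) * Real.exp (μ * s) := by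
          apply intervalIntegral.integral_mono_on ht0
          · exact ((hfu_cont.sub hfv_cont).abs.intervalIntegrable 0 t)
          · exact ((continuous_const.mul (Real.continuous_exp.comp
              (continuous_const.mul continuous_id))).intervalIntegrable 0 t)
          · intro s hs
            exact le_of_le_of_eq (key_inner s hs) (by ring)
      _ = bbar * ((p + q) * d) * E ^ 2 := by
          rw [intervalIntegral.integral_const_mul, integral_exp_mu hμ]
          rw [hEdef]
          ring
  -- combine
  have hsplit : Phi Z A B u t - Phi Z A B v t =
      (I1 A u t - I1 A v t) + (1/2) * (I2 B u t - I2 B v t) := by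
    rw [Phi, Phi]
    ring
  have habs : |Phi Z A B u t - Phi Z A B v t| ≤
      abar * d * E + (1/2) * (bbar * ((p + q) * d) * E ^ 2) := by
    rw [hsplit]
    calc |(I1 A u t - I1 A v t) + (1/2) * (I2 B u t - I2 B v t)|
        ≤ |I1 A u t - I1 A v t| + |(1/2) * (I2 B u t - I2 B v t)| := abs_add_le _ _
      _ = |I1 A u t - I1 A v t| + (1/2) * |I2 B u t - I2 B v t| := by
          rw [abs_mul]
          norm_num
      _ ≤ abar * d * E + (1/2) * (bbar * ((p + q) * d) * E ^ 2) := by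
          have := keyB
          nlinarith [keyA, keyB]
  have hw1 := w1 (T := T) hμ ht0 htT
  have hw2 := w2 (T := T) hμ ht0 htT
  have hexp0 : 0 < Real.exp (-(μ * t)) := Real.exp_pos _
  calc Real.exp (-(μ * t)) * |Phi Z A B u t - Phi Z A B v t|
      ≤ Real.exp (-(μ * t)) * (abar * d * E + (1/2) * (bbar * ((p + q) * d) * E ^ 2)) := by
        exact mul_le_mul_of_nonneg_left habs hexp0.le
    _ = abar * d * (Real.exp (-(μ * t)) * E) +
        (1/2) * (bbar * ((p + q) * d)) * (Real.exp (-(μ * t)) * E ^ 2) := by ring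
    _ ≤ abar * d * ((1 - Real.exp (-(μ * T))) / μ) +
        (1/2) * (bbar * ((p + q) * d)) * (2 * (Real.cosh (μ * T) - 1) / μ ^ 2) := by
        have hpq : 0 ≤ (p + q) * d := by positivity
        gcongr
    _ = (abar * ((1 - Real.exp (-(μ * T))) / μ) +
        bbar * ((Real.cosh (μ * T) - 1) / μ ^ 2) * (p + q)) * d := by ring
lemma wnorm_le {μ T M : ℝ} {f : ℝ → ℝ} (hT : 0 ≤ T)
    (h : ∀ t ∈ Icc (0:ℝ) T, Real.exp (-(μ * t)) * |f t| ≤ M) : wnorm μ T f ≤ M := by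
  apply csSup_le ((nonempty_Icc.2 hT).image _)
  rintro x ⟨t, ht, rfl⟩
  exact h t ht

lemma le_wnorm {μ T : ℝ} {f : ℝ → ℝ} (hf : ContinuousOn f (Icc 0 T)) {t : ℝ}
    (ht : t ∈ Icc (0:ℝ) T) : Real.exp (-(μ * t)) * |f t| ≤ wnorm μ T f := by
  apply le_csSup
  · apply IsCompact.bddAbove
    apply IsCompact.image_of_continuousOn isCompact_Icc
    exact ((Real.continuous_exp.comp (by fun_prop)).continuousOn).mul hf.abs
  · exact mem_image_of_mem _ ht

lemma unweight {μ t c x : ℝ} (h : Real.exp (-(μ * t)) * |x| ≤ c) :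
    |x| ≤ c * Real.exp (μ * t) := by
  have hp := Real.exp_pos (μ * t)
  have h2 := mul_le_mul_of_nonneg_left h hp.le
  rw [← mul_assoc, ← Real.exp_add] at h2
  simp only [add_neg_cancel, Real.exp_zero, one_mul] at h2
  exact h2.trans_eq (mul_comm _ _)

lemma toweight {μ t c x : ℝ} (h : |x| ≤ c * Real.exp (μ * t)) :
    Real.exp (-(μ * t)) * |x| ≤ c := by
  have hp := Real.exp_pos (-(μ * t))
  have h2 := mul_le_mul_of_nonneg_left h hp.le
  calc Real.exp (-(μ * t)) * |x| ≤ Real.exp (-(μ * t)) * (c * Real.exp (μ * t)) := h2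
    _ = c * (Real.exp (-(μ * t)) * Real.exp (μ * t)) := by ring
    _ = c := by rw [← Real.exp_add, neg_add_cancel, Real.exp_zero, mul_one]

lemma est2 {T abar bbar M : ℝ} {A : ℝ → ℝ → ℝ} {B : ℝ → ℝ → ℝ → ℝ} {u v : ℝ → ℝ}
    (hA : Continuous (fun p : ℝ × ℝ => A p.1 p.2))
    (hB : Continuous (fun p : ℝ × ℝ × ℝ => B p.1 p.2.1 p.2.2))
    (hu : Continuous u) (hv : Continuous v)
    (hAbd : ∀ t s : ℝ, 0 ≤ s → s ≤ t → t ≤ T → |A t s| ≤ abar)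
    (hBbd : ∀ t s σ : ℝ, 0 ≤ s → s ≤ t → 0 ≤ σ → σ ≤ t → t ≤ T → |B t s σ| ≤ bbar)
    (hM : 0 ≤ M)
    (huM : ∀ s ∈ Icc (0:ℝ) T, |u s| ≤ M) (hvM : ∀ s ∈ Icc (0:ℝ) T, |v s| ≤ M)
    (Z : ℝ → ℝ) {t : ℝ} (ht : t ∈ Icc (0:ℝ) T) :
    |Phi Z A B u t - Phi Z A B v t| ≤
      (abar + bbar * M * T) * ∫ s in (0:ℝ)..t, |u s - v s| := by
  obtain ⟨ht0, htT⟩ := ht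
  have h0T : (0:ℝ) ≤ T := ht0.trans htT
  have habar0 : 0 ≤ abar := le_trans (abs_nonneg _) (hAbd 0 0 le_rfl le_rfl h0T)
  have hbbar0 : 0 ≤ bbar := le_trans (abs_nonneg _) (hBbd 0 0 0 le_rfl le_rfl le_rfl le_rfl h0T)
  have hsub : ∀ s ∈ Icc (0:ℝ) t, s ∈ Icc (0:ℝ) T := fun s hs => ⟨hs.1, hs.2.trans htT⟩
  set J : ℝ := ∫ s in (0:ℝ)..t, |u s - v s| with hJdef
  have hJcont : Continuous fun s => |u s - v s| := (hu.sub hv).abs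
  have hJ0 : 0 ≤ J := intervalIntegral.integral_nonneg ht0 (fun s _ => abs_nonneg _)
  have hcu : Continuous fun s => A t s * u s :=
    ((hA.comp (by fun_prop : Continuous fun s : ℝ => (t, s))).mul hu)
  have hcv : Continuous fun s => A t s * v s :=
    ((hA.comp (by fun_prop : Continuous fun s : ℝ => (t, s))).mul hv)
  have keyA : |I1 A u t - I1 A v t| ≤ abar * J := by
    have h1 : I1 A u t - I1 A v t = ∫ s in (0:ℝ)..t, A t s * (u s - v s) := by
      rw [I1, I1, ← intervalIntegral.integral_sub (hcu.intervalIntegrable 0 t)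
        (hcv.intervalIntegrable 0 t)]
      congr 1
      ext s
      ring
    rw [h1]
    calc |∫ s in (0:ℝ)..t, A t s * (u s - v s)|
        ≤ ∫ s in (0:ℝ)..t, |A t s * (u s - v s)| :=
          intervalIntegral.abs_integral_le_integral_abs ht0
      _ ≤ ∫ s in (0:ℝ)..t, abar * |u s - v s| := by
          apply intervalIntegral.integral_mono_on ht0
          · exact (((hA.comp (by fun_prop : Continuous fun s : ℝ => (t, s))).mul
              (hu.sub hv)).abs.intervalIntegrable 0 t)
          · exact ((continuous_const.mul hJcont).intervalIntegrable 0 t)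
          · intro s hs
            rw [abs_mul]
            exact mul_le_mul_of_nonneg_right (hAbd t s hs.1 hs.2 htT) (abs_nonneg _)
      _ = abar * J := by rw [intervalIntegral.integral_const_mul]
  set fu : ℝ → ℝ := fun s => ∫ σ in (0:ℝ)..t, B t s σ * u s * u σ with hfudef
  set fv : ℝ → ℝ := fun s => ∫ σ in (0:ℝ)..t, B t s σ * v s * v σ with hfvdef
  have hBcw : ∀ (w : ℝ → ℝ), Continuous w → Continuous (Function.uncurry fun (s σ : ℝ) =>
      B t s σ * w s * w σ) := by
    intro w hw
    have h1 : Continuous fun z : ℝ × ℝ => B t z.1 z.2 :=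
      hB.comp (f := fun z : ℝ × ℝ => (t, z.1, z.2)) (by fun_prop)
    exact (h1.mul (hw.comp continuous_fst)).mul (hw.comp continuous_snd)
  have hfu_cont : Continuous fu :=
    intervalIntegral.continuous_parametric_intervalIntegral_of_continuous'
      (hBcw u hu) 0 t
  have hfv_cont : Continuous fv :=
    intervalIntegral.continuous_parametric_intervalIntegral_of_continuous'
      (hBcw v hv) 0 t
  have key_inner : ∀ s ∈ Icc (0:ℝ) t,
      |fu s - fv s| ≤ bbar * M * J + (bbar * M * t) * |u s - v s| := by
    intro s hs
    have hsT := hsub s hs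
    have hc1 : Continuous fun σ => B t s σ * u s * u σ :=
      ((hB.comp (f := fun σ : ℝ => (t, s, σ)) (by fun_prop)).mul continuous_const).mul hu
    have hc2 : Continuous fun σ => B t s σ * v s * v σ :=
      ((hB.comp (f := fun σ : ℝ => (t, s, σ)) (by fun_prop)).mul continuous_const).mul hv
    have h2 : fu s - fv s =
        ∫ σ in (0:ℝ)..t, (B t s σ * u s * u σ - B t s σ * v s * v σ) := by
      rw [hfudef, hfvdef]
      rw [← intervalIntegral.integral_sub (hc1.intervalIntegrable 0 t)
        (hc2.intervalIntegrable 0 t)]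
    rw [h2]
    calc |∫ σ in (0:ℝ)..t, (B t s σ * u s * u σ - B t s σ * v s * v σ)|
        ≤ ∫ σ in (0:ℝ)..t, |B t s σ * u s * u σ - B t s σ * v s * v σ| :=
          intervalIntegral.abs_integral_le_integral_abs ht0
      _ ≤ ∫ σ in (0:ℝ)..t, (bbar * M * |u σ - v σ| + bbar * M * |u s - v s|) := by
          apply intervalIntegral.integral_mono_on ht0
          · exact ((hc1.sub hc2).abs.intervalIntegrable 0 t)
          · exact (((continuous_const.mul hJcont).add continuous_const).intervalIntegrable 0 t)
          · intro σ hσ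
            have hσT := hsub σ hσ
            have e2 : B t s σ * u s * u σ - B t s σ * v s * v σ =
                B t s σ * (u s * (u σ - v σ) + (u s - v s) * v σ) := by ring
            rw [e2, abs_mul]
            have h4 := abs_add_le (u s * (u σ - v σ)) ((u s - v s) * v σ)
            rw [abs_mul, abs_mul] at h4
            have h5 : |u s| * |u σ - v σ| ≤ M * |u σ - v σ| :=
              mul_le_mul_of_nonneg_right (huM s hsT) (abs_nonneg _)
            have h6 : |u s - v s| * |v σ| ≤ |u s - v s| * M :=
              mul_le_mul_of_nonneg_left (hvM σ hσT) (abs_nonneg _)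
            have h7 : |u s * (u σ - v σ) + (u s - v s) * v σ| ≤
                M * |u σ - v σ| + |u s - v s| * M := by linarith
            have h8 := mul_le_mul (hBbd t s σ hs.1 hs.2 hσ.1 hσ.2 htT) h7
              (abs_nonneg _) hbbar0
            calc |B t s σ| * |u s * (u σ - v σ) + (u s - v s) * v σ|
                ≤ bbar * (M * |u σ - v σ| + |u s - v s| * M) := h8
              _ = bbar * M * |u σ - v σ| + bbar * M * |u s - v s| := by ring
      _ = bbar * M * J + (bbar * M * t) * |u s - v s| := by
          rw [intervalIntegral.integral_add (f := fun σ => bbar * M * |u σ - v σ|)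
            ((continuous_const.mul hJcont).intervalIntegrable 0 t)
            (continuous_const.intervalIntegrable 0 t)]
          rw [intervalIntegral.integral_const_mul, intervalIntegral.integral_const]
          rw [hJdef]
          simp [smul_eq_mul]
          ring
  have keyB : |I2 B u t - I2 B v t| ≤ 2 * (bbar * M * T) * J := by
    have h3 : I2 B u t - I2 B v t = ∫ s in (0:ℝ)..t, (fu s - fv s) := by
      rw [I2, I2, ← intervalIntegral.integral_sub (hfu_cont.intervalIntegrable 0 t)
        (hfv_cont.intervalIntegrable 0 t)]
    rw [h3]
    calc |∫ s in (0:ℝ)..t, (fu s - fv s)|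
        ≤ ∫ s in (0:ℝ)..t, |fu s - fv s| :=
          intervalIntegral.abs_integral_le_integral_abs ht0
      _ ≤ ∫ s in (0:ℝ)..t, (bbar * M * J + (bbar * M * t) * |u s - v s|) := by
          apply intervalIntegral.integral_mono_on ht0
          · exact ((hfu_cont.sub hfv_cont).abs.intervalIntegrable 0 t)
          · exact ((continuous_const.add (continuous_const.mul hJcont)).intervalIntegrable 0 t)
          · exact key_inner
      _ = bbar * M * J * t + (bbar * M * t) * J := by
          rw [intervalIntegral.integral_add (g := fun s => bbar * M * t * |u s - v s|)
            (continuous_const.intervalIntegrable 0 t)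
            ((continuous_const.mul hJcont).intervalIntegrable 0 t)]
          rw [intervalIntegral.integral_const_mul, intervalIntegral.integral_const]
          rw [hJdef]
          simp [smul_eq_mul]
          ring
      _ ≤ 2 * (bbar * M * T) * J := by nlinarith [mul_nonneg (mul_nonneg hbbar0 hM) hJ0]
  have hsplit : Phi Z A B u t - Phi Z A B v t =
      (I1 A u t - I1 A v t) + (1/2) * (I2 B u t - I2 B v t) := by
    rw [Phi, Phi]
    ring
  calc |Phi Z A B u t - Phi Z A B v t|
      ≤ |I1 A u t - I1 A v t| + (1/2) * |I2 B u t - I2 B v t| := by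
        rw [hsplit]
        have := abs_add_le (I1 A u t - I1 A v t) ((1/2) * (I2 B u t - I2 B v t))
        rw [abs_mul] at this
        calc |(I1 A u t - I1 A v t) + 1 / 2 * (I2 B u t - I2 B v t)|
            ≤ |I1 A u t - I1 A v t| + |(1:ℝ)/2| * |I2 B u t - I2 B v t| := this
          _ = |I1 A u t - I1 A v t| + (1/2) * |I2 B u t - I2 B v t| := by norm_num
    _ ≤ abar * J + (1/2) * (2 * (bbar * M * T) * J) := by
        have := keyB
        have h9 : (1/2 : ℝ) * |I2 B u t - I2 B v t| ≤ (1/2) * (2 * (bbar * M * T) * J) := by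
          linarith
        linarith [keyA]
    _ = (abar + bbar * M * T) * J := by ring

end RV

set_option maxHeartbeats 1000000

/-- (Theorem 6.1) Under the conditions of Lemma 6.1, the scalar
Riccati–Volterra equation
`z(t) = z₀(t) + ∫₀ᵗ a(t,s)z(s)ds + (1/2)∫₀ᵗ∫₀ᵗ b(t,s,σ)z(s)z(σ)ds dσ`
has a unique continuous solution with `‖z‖_μ ≤ r̄`. -/
theorem riccati_volterra_existence_uniqueness
    (T μ : ℝ) (hT : 0 < T) (hμ : 0 < μ)
    (z₀ : ℝ → ℝ) (hz₀ : ContinuousOn z₀ (Icc 0 T))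
    (a : ℝ → ℝ → ℝ)
    (hacont : ContinuousOn (fun p : ℝ × ℝ => a p.1 p.2)
      {p : ℝ × ℝ | 0 ≤ p.2 ∧ p.2 ≤ p.1 ∧ p.1 ≤ T})
    (b : ℝ → ℝ → ℝ → ℝ)
    (hbcont : ContinuousOn (fun p : ℝ × ℝ × ℝ => b p.1 p.2.1 p.2.2)
      {p : ℝ × ℝ × ℝ | 0 ≤ p.2.1 ∧ p.2.1 ≤ p.1 ∧ 0 ≤ p.2.2 ∧ p.2.2 ≤ p.1 ∧ p.1 ≤ T})
    (abar : ℝ)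
    (habar : IsGreatest ((fun p : ℝ × ℝ => |a p.1 p.2|) ''
      {p : ℝ × ℝ | 0 ≤ p.2 ∧ p.2 ≤ p.1 ∧ p.1 ≤ T}) abar)
    (bbar : ℝ)
    (hbbar : IsGreatest ((fun p : ℝ × ℝ × ℝ => |b p.1 p.2.1 p.2.2|) ''
      {p : ℝ × ℝ × ℝ | 0 ≤ p.2.1 ∧ p.2.1 ≤ p.1 ∧ 0 ≤ p.2.2 ∧ p.2.2 ≤ p.1 ∧ p.1 ≤ T}) bbar)
    (c₀ α β : ℝ)
    (hc₀ : c₀ = wnorm μ T z₀)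
    (hα : α = abar * ((1 - Real.exp (-(μ * T))) / μ))
    (hβ : β = bbar * ((Real.cosh (μ * T) - 1) / μ ^ 2))
    (rbar : ℝ)
    (hroot : β * rbar ^ 2 + (α - 1) * rbar + c₀ = 0)
    (hlargest : ∀ ξ : ℝ, β * ξ ^ 2 + (α - 1) * ξ + c₀ = 0 → ξ ≤ rbar)
    (hαlt : α < 1) (hdisc : c₀ * β ≤ (1/4) * (α - 1) ^ 2) (hc₀le : c₀ ≤ rbar) :
    ∃ z : ℝ → ℝ,
      (ContinuousOn z (Icc 0 T) ∧ wnorm μ T z ≤ rbar ∧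
        ∀ t ∈ Icc (0:ℝ) T,
          z t = z₀ t + (∫ s in (0:ℝ)..t, a t s * z s) +
            (1/2) * ∫ s in (0:ℝ)..t, ∫ σ in (0:ℝ)..t, b t s σ * z s * z σ) ∧
      ∀ z' : ℝ → ℝ,
        (ContinuousOn z' (Icc 0 T) ∧ wnorm μ T z' ≤ rbar ∧
          ∀ t ∈ Icc (0:ℝ) T,
            z' t = z₀ t + (∫ s in (0:ℝ)..t, a t s * z' s) +
              (1/2) * ∫ s in (0:ℝ)..t, ∫ σ in (0:ℝ)..t, b t s σ * z' s * z' σ) →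
        ∀ t ∈ Icc (0:ℝ) T, z' t = z t := by
  classical
  have hT' : (0:ℝ) ≤ T := hT.le
  have h0mem : (0:ℝ) ∈ Icc (0:ℝ) T := ⟨le_rfl, hT'⟩
  -- bounds on a, b over their domains
  have habd : ∀ t s : ℝ, 0 ≤ s → s ≤ t → t ≤ T → |a t s| ≤ abar :=
    fun t s h1 h2 h3 => habar.2 ⟨(t, s), ⟨h1, h2, h3⟩, rfl⟩
  have hbbd : ∀ t s σ : ℝ, 0 ≤ s → s ≤ t → 0 ≤ σ → σ ≤ t → t ≤ T → |b t s σ| ≤ bbar :=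
    fun t s σ h1 h2 h3 h4 h5 => hbbar.2 ⟨(t, s, σ), ⟨h1, h2, h3, h4, h5⟩, rfl⟩
  have habar0 : 0 ≤ abar := le_trans (abs_nonneg _) (habd 0 0 le_rfl le_rfl hT')
  have hbbar0 : 0 ≤ bbar :=
    le_trans (abs_nonneg _) (hbbd 0 0 0 le_rfl le_rfl le_rfl le_rfl hT')
  -- Tietze extensions of the kernels
  have hK1 : IsClosed {p : ℝ × ℝ | 0 ≤ p.2 ∧ p.2 ≤ p.1 ∧ p.1 ≤ T} := by
    show IsClosed ({p : ℝ × ℝ | 0 ≤ p.2} ∩ ({p : ℝ × ℝ | p.2 ≤ p.1} ∩ {p : ℝ × ℝ | p.1 ≤ T}))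
    exact (isClosed_le continuous_const continuous_snd).inter
      ((isClosed_le continuous_snd continuous_fst).inter
        (isClosed_le continuous_fst continuous_const))
  have hK2 : IsClosed {p : ℝ × ℝ × ℝ | 0 ≤ p.2.1 ∧ p.2.1 ≤ p.1 ∧ 0 ≤ p.2.2 ∧
      p.2.2 ≤ p.1 ∧ p.1 ≤ T} := by
    show IsClosed ({p : ℝ × ℝ × ℝ | 0 ≤ p.2.1} ∩ ({p : ℝ × ℝ × ℝ | p.2.1 ≤ p.1} ∩
      ({p : ℝ × ℝ × ℝ | 0 ≤ p.2.2} ∩ ({p : ℝ × ℝ × ℝ | p.2.2 ≤ p.1} ∩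
        {p : ℝ × ℝ × ℝ | p.1 ≤ T}))))
    exact (isClosed_le continuous_const (continuous_fst.comp continuous_snd)).inter
      ((isClosed_le (continuous_fst.comp continuous_snd) continuous_fst).inter
        ((isClosed_le continuous_const (continuous_snd.comp continuous_snd)).inter
          ((isClosed_le (continuous_snd.comp continuous_snd) continuous_fst).inter
            (isClosed_le continuous_fst continuous_const))))
  obtain ⟨Atil, hAtil⟩ := ContinuousMap.exists_restrict_eq hK1
    (ContinuousMap.mk _ hacont.restrict)
  obtain ⟨Btil, hBtil⟩ := ContinuousMap.exists_restrict_eq hK2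
    (ContinuousMap.mk _ hbcont.restrict)
  set A : ℝ → ℝ → ℝ := fun t s => Atil (t, s) with hAdef
  set B : ℝ → ℝ → ℝ → ℝ := fun t s σ => Btil (t, s, σ) with hBdef
  have hAeq : ∀ t s : ℝ, 0 ≤ s → s ≤ t → t ≤ T → A t s = a t s := by
    intro t s h1 h2 h3
    have := DFunLike.congr_fun hAtil ⟨(t, s), ⟨h1, h2, h3⟩⟩
    simpa using this
  have hBeq : ∀ t s σ : ℝ, 0 ≤ s → s ≤ t → 0 ≤ σ → σ ≤ t → t ≤ T → B t s σ = b t s σ := by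
    intro t s σ h1 h2 h3 h4 h5
    have := DFunLike.congr_fun hBtil ⟨(t, s, σ), ⟨h1, h2, h3, h4, h5⟩⟩
    simpa using this
  have hAc : Continuous (fun p : ℝ × ℝ => A p.1 p.2) := Atil.continuous
  have hBc : Continuous (fun p : ℝ × ℝ × ℝ => B p.1 p.2.1 p.2.2) := Btil.continuous
  have hAbd : ∀ t s : ℝ, 0 ≤ s → s ≤ t → t ≤ T → |A t s| ≤ abar := by
    intro t s h1 h2 h3
    rw [hAeq t s h1 h2 h3]
    exact habd t s h1 h2 h3
  have hBbd : ∀ t s σ : ℝ, 0 ≤ s → s ≤ t → 0 ≤ σ → σ ≤ t → t ≤ T → |B t s σ| ≤ bbar := by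
    intro t s σ h1 h2 h3 h4 h5
    rw [hBeq t s σ h1 h2 h3 h4 h5]
    exact hbbd t s σ h1 h2 h3 h4 h5
  -- extension of z₀
  set Z : ℝ → ℝ := fun t => z₀ (projIcc 0 T hT' t) with hZdef
  have hZcont : Continuous Z :=
    hz₀.comp_continuous (continuous_subtype_val.comp continuous_projIcc)
      (fun x => (projIcc 0 T hT' x).2)
  have hZeq : ∀ t ∈ Icc (0:ℝ) T, Z t = z₀ t := by
    intro t ht
    simp [hZdef, projIcc_of_mem hT' ht]
  have hc₀0 : 0 ≤ c₀ := by
    rw [hc₀]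
    exact le_trans (by positivity) (RV.le_wnorm hz₀ h0mem)
  have hZbd : ∀ t ∈ Icc (0:ℝ) T, |Z t| ≤ c₀ * Real.exp (μ * t) := by
    intro t ht
    apply RV.unweight
    rw [hZeq t ht, hc₀]
    exact RV.le_wnorm hz₀ ht
  -- nonnegativity of α, β, rbar
  have hexpT1 : Real.exp (-(μ * T)) ≤ 1 := by
    rw [← Real.exp_zero]
    apply Real.exp_le_exp.2
    nlinarith
  have hα0 : 0 ≤ α := by
    rw [hα]
    exact mul_nonneg habar0 (div_nonneg (by linarith) hμ.le)
  have hβ0 : 0 ≤ β := by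
    rw [hβ]
    have h1 := Real.one_le_cosh (μ * T)
    exact mul_nonneg hbbar0 (div_nonneg (by linarith) (by positivity))
  have hR0 : 0 ≤ rbar := hc₀0.trans hc₀le
  have hψR : c₀ + α * rbar + β * rbar ^ 2 = rbar := by linear_combination hroot
  -- the comparison sequence ρ
  set ψ : ℝ → ℝ := fun x => c₀ + α * x + β * x ^ 2 with hψdef
  set ρ : ℕ → ℝ := fun n => ψ^[n] 0 with hρdef
  have hρ0 : ρ 0 = 0 := rfl
  have hρsucc : ∀ n, ρ (n + 1) = ψ (ρ n) := fun n => Function.iterate_succ_apply' ψ n 0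
  have hψmono : ∀ x y : ℝ, 0 ≤ x → x ≤ y → ψ x ≤ ψ y := by
    intro x y hx hxy
    simp only [hψdef]
    have h1 : x ^ 2 ≤ y ^ 2 := by nlinarith
    nlinarith [mul_le_mul_of_nonneg_left h1 hβ0, mul_le_mul_of_nonneg_left hxy hα0]
  have hkey : ∀ n, 0 ≤ ρ n ∧ ρ n ≤ rbar := by
    intro n
    induction n with
    | zero => exact ⟨le_rfl, hR0⟩
    | succ n ih =>
      rw [hρsucc]
      constructor
      · simp only [hψdef]
        nlinarith [ih.1]
      · calc ψ (ρ n) ≤ ψ rbar := hψmono _ _ ih.1 ih.2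
          _ = rbar := by rw [hψdef]; exact hψR
  have hρstep : ∀ n, ρ n ≤ ρ (n + 1) := by
    intro n
    induction n with
    | zero =>
      rw [hρsucc, hρ0]
      simp only [hψdef]
      nlinarith
    | succ n ih =>
      calc ρ (n + 1) = ψ (ρ n) := hρsucc n
        _ ≤ ψ (ρ (n + 1)) := hψmono _ _ (hkey n).1 ih
        _ = ρ (n + 1 + 1) := (hρsucc (n + 1)).symm
  have hρmono : Monotone ρ := monotone_nat_of_le_succ hρstep
  have hρcauchy : CauchySeq ρ := by
    obtain ⟨L, hL⟩ : ∃ L, Filter.Tendsto ρ Filter.atTop (nhds L) :=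
      ⟨_, tendsto_atTop_ciSup hρmono ⟨rbar, by rintro x ⟨n, rfl⟩; exact (hkey n).2⟩⟩
    exact hL.cauchySeq
  -- Picard iterates
  set Φ : (ℝ → ℝ) → ℝ → ℝ := RV.Phi Z A B with hΦdef
  set u : ℕ → ℝ → ℝ := fun n => Φ^[n] (fun _ => 0) with hudef
  have hu0 : u 0 = fun _ => 0 := rfl
  have husucc : ∀ n, u (n + 1) = Φ (u n) := fun n =>
    Function.iterate_succ_apply' Φ n (fun _ => 0)
  have hucont : ∀ n, Continuous (u n) := by
    intro n
    induction n with
    | zero => exact continuous_const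
    | succ n ih =>
      rw [husucc]
      exact RV.cont_Phi hZcont hAc hBc ih
  -- the master estimate specialised
  have hest : ∀ (uu vv : ℝ → ℝ), Continuous uu → Continuous vv →
      ∀ (p q d : ℝ), 0 ≤ p → 0 ≤ q → 0 ≤ d →
      (∀ s ∈ Icc (0:ℝ) T, |uu s| ≤ p * Real.exp (μ * s)) →
      (∀ s ∈ Icc (0:ℝ) T, |vv s| ≤ q * Real.exp (μ * s)) →
      (∀ s ∈ Icc (0:ℝ) T, |uu s - vv s| ≤ d * Real.exp (μ * s)) →
      ∀ t ∈ Icc (0:ℝ) T,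
        Real.exp (-(μ * t)) * |Φ uu t - Φ vv t| ≤ (α + β * (p + q)) * d := by
    intro uu vv huu hvv p q d hp hq hd h1 h2 h3 t ht
    have := RV.est hμ hAc hBc huu hvv hAbd hBbd hp hq hd h1 h2 h3 Z ht
    rw [hα, hβ]
    calc Real.exp (-(μ * t)) * |Φ uu t - Φ vv t| ≤
        (abar * ((1 - Real.exp (-(μ * T))) / μ) +
          bbar * ((Real.cosh (μ * T) - 1) / μ ^ 2) * (p + q)) * d := this
      _ = (abar * ((1 - Real.exp (-(μ * T))) / μ) +
          bbar * ((Real.cosh (μ * T) - 1) / μ ^ 2) * (p + q)) * d := rfl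
  -- bounds on the iterates
  have hbd : ∀ n, ∀ t ∈ Icc (0:ℝ) T, |u n t| ≤ ρ n * Real.exp (μ * t) := by
    intro n
    induction n with
    | zero =>
      intro t ht
      rw [hu0, hρ0]
      simp
    | succ n ih =>
      intro t ht
      have h0 : ∀ s ∈ Icc (0:ℝ) T, |(fun _ => (0:ℝ)) s| ≤ 0 * Real.exp (μ * s) := by
        intro s hs; simp
      have hd : ∀ s ∈ Icc (0:ℝ) T, |u n s - (fun _ => (0:ℝ)) s| ≤ ρ n * Real.exp (μ * s) := by
        intro s hs; simpa using ih s hs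
      have hΦ0 : ∀ r : ℝ, Φ (fun _ => 0) r = Z r := fun r => RV.Phi_zero Z A B r
      have h5 := hest (u n) (fun _ => 0) (hucont n) continuous_const
        (ρ n) 0 (ρ n) (hkey n).1 le_rfl (hkey n).1 ih h0 hd t ht
      rw [hΦ0] at h5
      have h6 : |Φ (u n) t - Z t| ≤ (α + β * (ρ n + 0)) * ρ n * Real.exp (μ * t) :=
        RV.unweight h5
      have h7 := hZbd t ht
      have h8 : |Φ (u n) t| ≤ ((α + β * ρ n) * ρ n + c₀) * Real.exp (μ * t) := by
        have := abs_sub_abs_le_abs_sub (Φ (u n) t) (Z t)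
        have h9 := abs_add_le (Φ (u n) t - Z t) (Z t)
        simp only [sub_add_cancel] at h9
        calc |Φ (u n) t| ≤ |Φ (u n) t - Z t| + |Z t| := h9
          _ ≤ (α + β * (ρ n + 0)) * ρ n * Real.exp (μ * t) + c₀ * Real.exp (μ * t) := by
              exact add_le_add h6 h7
          _ = ((α + β * ρ n) * ρ n + c₀) * Real.exp (μ * t) := by ring
      rw [husucc, hρsucc]
      calc |Φ (u n) t| ≤ ((α + β * ρ n) * ρ n + c₀) * Real.exp (μ * t) := h8
        _ = ψ (ρ n) * Real.exp (μ * t) := by rw [hψdef]; ring_nf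
  -- Cauchy estimate on differences
  have hdiff : ∀ n k, ∀ t ∈ Icc (0:ℝ) T,
      |u (n + k) t - u n t| ≤ (ρ (n + k) - ρ n) * Real.exp (μ * t) := by
    intro n
    induction n with
    | zero =>
      intro k t ht
      rw [hu0, hρ0]
      simpa using hbd k t ht
    | succ n ih =>
      intro k t ht
      have hmono : ρ n ≤ ρ (n + k) := hρmono (Nat.le_add_right n k)
      have hd : ∀ s ∈ Icc (0:ℝ) T,
          |u (n + k) s - u n s| ≤ (ρ (n + k) - ρ n) * Real.exp (μ * s) := ih k
      have h5 := hest (u (n + k)) (u n) (hucont _) (hucont _)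
        (ρ (n + k)) (ρ n) (ρ (n + k) - ρ n) (hkey _).1 (hkey _).1 (by linarith)
        (hbd _) (hbd _) hd t ht
      have h6 : |Φ (u (n + k)) t - Φ (u n) t| ≤
          (α + β * (ρ (n + k) + ρ n)) * (ρ (n + k) - ρ n) * Real.exp (μ * t) :=
        RV.unweight h5
      have heq : n + 1 + k = (n + k) + 1 := by omega
      rw [heq, husucc (n + k), husucc n, hρsucc (n + k), hρsucc n]
      calc |Φ (u (n + k)) t - Φ (u n) t| ≤
          (α + β * (ρ (n + k) + ρ n)) * (ρ (n + k) - ρ n) * Real.exp (μ * t) := h6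
        _ = (ψ (ρ (n + k)) - ψ (ρ n)) * Real.exp (μ * t) := by rw [hψdef]; ring_nf
  -- Cauchy sequence in C(Icc 0 T, ℝ)
  set f : ℕ → C(↥(Icc (0:ℝ) T), ℝ) := fun n =>
    ContinuousMap.mk (fun x => u n ↑x) ((hucont n).comp continuous_subtype_val) with hfdef
  have hexpT : (0:ℝ) < Real.exp (μ * T) := Real.exp_pos _
  have hexp1 : ∀ t ∈ Icc (0:ℝ) T, (1:ℝ) ≤ Real.exp (μ * t) := fun t ht =>
    Real.one_le_exp (mul_nonneg hμ.le ht.1)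
  have hexple : ∀ t ∈ Icc (0:ℝ) T, Real.exp (μ * t) ≤ Real.exp (μ * T) := fun t ht =>
    Real.exp_le_exp.2 (mul_le_mul_of_nonneg_left ht.2 hμ.le)
  have hdistf : ∀ n k, dist (f (n + k)) (f n) ≤ (ρ (n + k) - ρ n) * Real.exp (μ * T) := by
    intro n k
    have hmono : ρ n ≤ ρ (n + k) := hρmono (Nat.le_add_right n k)
    rw [ContinuousMap.dist_le (mul_nonneg (by linarith) hexpT.le)]
    intro x
    rw [Real.dist_eq]
    calc |u (n + k) ↑x - u n ↑x| ≤ (ρ (n + k) - ρ n) * Real.exp (μ * ↑x) :=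
        hdiff n k ↑x x.2
      _ ≤ (ρ (n + k) - ρ n) * Real.exp (μ * T) :=
        mul_le_mul_of_nonneg_left (hexple ↑x x.2) (by linarith)
  have hfc : CauchySeq f := by
    rw [Metric.cauchySeq_iff']
    intro ε hε
    have hε' : 0 < ε / Real.exp (μ * T) := by positivity
    obtain ⟨N, hN⟩ := Metric.cauchySeq_iff'.1 hρcauchy (ε / Real.exp (μ * T)) hε'
    refine ⟨N, fun n hn => ?_⟩
    obtain ⟨k, rfl⟩ := Nat.exists_eq_add_of_le hn
    have hmono : ρ N ≤ ρ (N + k) := hρmono (Nat.le_add_right N k)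
    have h2 := hN (N + k) (Nat.le_add_right N k)
    rw [Real.dist_eq, abs_of_nonneg (by linarith : (0:ℝ) ≤ ρ (N + k) - ρ N)] at h2
    calc dist (f (N + k)) (f N) ≤ (ρ (N + k) - ρ N) * Real.exp (μ * T) := hdistf N k
      _ < (ε / Real.exp (μ * T)) * Real.exp (μ * T) :=
        mul_lt_mul_of_pos_right (by linarith) hexpT
      _ = ε := by field_simp
  obtain ⟨g, hg⟩ := cauchySeq_tendsto_of_complete hfc
  set z : ℝ → ℝ := fun t => g (projIcc 0 T hT' t) with hzdef
  have hzcont : Continuous z := g.continuous.comp continuous_projIcc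
  have hzeq : ∀ (t : ℝ) (ht : t ∈ Icc (0:ℝ) T), z t = g ⟨t, ht⟩ := by
    intro t ht
    simp [hzdef, projIcc_of_mem hT' ht]
  set D : ℕ → ℝ := fun n => dist (f n) g with hDdef
  have hD0 : ∀ n, 0 ≤ D n := fun n => dist_nonneg
  have hDto : Filter.Tendsto D Filter.atTop (nhds 0) :=
    tendsto_iff_dist_tendsto_zero.1 hg
  have huz : ∀ n, ∀ t ∈ Icc (0:ℝ) T, |u n t - z t| ≤ D n := by
    intro n t ht
    rw [hzeq t ht]
    have h1 := ContinuousMap.dist_apply_le_dist (f := f n) (g := g) ⟨t, ht⟩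
    rw [Real.dist_eq] at h1
    exact h1
  -- bound for the limit
  have hzbd : ∀ t ∈ Icc (0:ℝ) T, |z t| ≤ rbar * Real.exp (μ * t) := by
    intro t ht
    have hlim : Filter.Tendsto (fun n => rbar * Real.exp (μ * t) + D n) Filter.atTop
        (nhds (rbar * Real.exp (μ * t))) := by
      have h0 : Filter.Tendsto (fun _ : ℕ => rbar * Real.exp (μ * t)) Filter.atTop
          (nhds (rbar * Real.exp (μ * t))) := tendsto_const_nhds
      have h1 := h0.add hDto
      rwa [add_zero] at h1
    apply ge_of_tendsto hlim
    filter_upwards with n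
    have h1 := hbd n t ht
    have h2 := huz n t ht
    have h4 : |z t| - |u n t| ≤ |z t - u n t| := abs_sub_abs_le_abs_sub _ _
    rw [abs_sub_comm] at h4
    have h5 := mul_le_mul_of_nonneg_right (hkey n).2 (Real.exp_pos (μ * t)).le
    linarith
  -- the fixed point property
  have hfix : ∀ t ∈ Icc (0:ℝ) T, z t = Φ z t := by
    intro t ht
    have hco : 0 ≤ α + β * (rbar + rbar) := by
      have := mul_nonneg hβ0 (by linarith : (0:ℝ) ≤ rbar + rbar)
      linarith
    have hlim : Filter.Tendsto
        (fun n => D (n + 1) + (α + β * (rbar + rbar)) * D n * Real.exp (μ * T))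
        Filter.atTop (nhds 0) := by
      have h1 : Filter.Tendsto (fun n => D (n + 1)) Filter.atTop (nhds 0) :=
        hDto.comp (Filter.tendsto_add_atTop_nat 1)
      have h2 := (hDto.const_mul (α + β * (rbar + rbar))).mul_const (Real.exp (μ * T))
      simpa using h1.add h2
    have hbound : ∀ n, |z t - Φ z t| ≤
        D (n + 1) + (α + β * (rbar + rbar)) * D n * Real.exp (μ * T) := by
      intro n
      have hubd' : ∀ s ∈ Icc (0:ℝ) T, |u n s| ≤ rbar * Real.exp (μ * s) := by
        intro s hs
        exact le_trans (hbd n s hs)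
          (mul_le_mul_of_nonneg_right (hkey n).2 (Real.exp_pos _).le)
      have hdn : ∀ s ∈ Icc (0:ℝ) T, |u n s - z s| ≤ D n * Real.exp (μ * s) := by
        intro s hs
        calc |u n s - z s| ≤ D n := huz n s hs
          _ = D n * 1 := (mul_one _).symm
          _ ≤ D n * Real.exp (μ * s) := mul_le_mul_of_nonneg_left (hexp1 s hs) (hD0 n)
      have h5 := hest (u n) z (hucont n) hzcont rbar rbar (D n) hR0 hR0 (hD0 n)
        hubd' hzbd hdn t ht
      have h6 : |Φ (u n) t - Φ z t| ≤
          (α + β * (rbar + rbar)) * D n * Real.exp (μ * t) := by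
        exact le_of_le_of_eq (RV.unweight h5) (by ring)
      have h7 : |z t - u (n + 1) t| ≤ D (n + 1) := by
        rw [abs_sub_comm]
        exact huz (n + 1) t ht
      have h8 : z t - Φ z t = (z t - u (n + 1) t) + (Φ (u n) t - Φ z t) := by
        rw [husucc]
        ring
      calc |z t - Φ z t| = |(z t - u (n + 1) t) + (Φ (u n) t - Φ z t)| := by rw [h8]
        _ ≤ |z t - u (n + 1) t| + |Φ (u n) t - Φ z t| := abs_add_le _ _
        _ ≤ D (n + 1) + (α + β * (rbar + rbar)) * D n * Real.exp (μ * t) :=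
            add_le_add h7 h6
        _ ≤ D (n + 1) + (α + β * (rbar + rbar)) * D n * Real.exp (μ * T) := by
            have h10 := hexple t ht
            have h11 : 0 ≤ (α + β * (rbar + rbar)) * D n := mul_nonneg hco (hD0 n)
            nlinarith
    have h12 : |z t - Φ z t| ≤ 0 :=
      ge_of_tendsto hlim (Filter.Eventually.of_forall hbound)
    have h13 : |z t - Φ z t| = 0 := le_antisymm h12 (abs_nonneg _)
    have h14 := abs_eq_zero.1 h13
    linarith
  have hwz : wnorm μ T z ≤ rbar := RV.wnorm_le hT' (fun t ht => RV.toweight (hzbd t ht))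
  -- translation between extended and original kernels
  have hconv : ∀ (y w : ℝ → ℝ), (∀ s ∈ Icc (0:ℝ) T, y s = w s) → ∀ t ∈ Icc (0:ℝ) T,
      (Z t + RV.I1 A w t + (1/2) * RV.I2 B w t)
        = z₀ t + (∫ s in (0:ℝ)..t, a t s * y s) +
          (1/2) * ∫ s in (0:ℝ)..t, ∫ σ in (0:ℝ)..t, b t s σ * y s * y σ := by
    intro y w hyw t ht
    have huIcc : uIcc (0:ℝ) t = Icc 0 t := uIcc_of_le ht.1
    have hsub : ∀ s ∈ Icc (0:ℝ) t, s ∈ Icc (0:ℝ) T := fun s hs => ⟨hs.1, hs.2.trans ht.2⟩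
    have e1 : RV.I1 A w t = ∫ s in (0:ℝ)..t, a t s * y s := by
      rw [RV.I1]
      apply intervalIntegral.integral_congr
      intro s hs
      rw [huIcc] at hs
      show A t s * w s = a t s * y s
      rw [hAeq t s hs.1 hs.2 ht.2, hyw s (hsub s hs)]
    have e2 : RV.I2 B w t = ∫ s in (0:ℝ)..t, ∫ σ in (0:ℝ)..t, b t s σ * y s * y σ := by
      rw [RV.I2]
      apply intervalIntegral.integral_congr
      intro s hs
      rw [huIcc] at hs
      apply intervalIntegral.integral_congr
      intro σ hσ
      rw [huIcc] at hσ
      show B t s σ * w s * w σ = b t s σ * y s * y σ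
      rw [hBeq t s σ hs.1 hs.2 hσ.1 hσ.2 ht.2, hyw s (hsub s hs), hyw σ (hsub σ hσ)]
    rw [e1, e2, hZeq t ht]
  refine ⟨z, ⟨hzcont.continuousOn, hwz, ?_⟩, ?_⟩
  · intro t ht
    calc z t = Φ z t := hfix t ht
      _ = Z t + RV.I1 A z t + (1/2) * RV.I2 B z t := rfl
      _ = z₀ t + (∫ s in (0:ℝ)..t, a t s * z s) +
          (1/2) * ∫ s in (0:ℝ)..t, ∫ σ in (0:ℝ)..t, b t s σ * z s * z σ :=
        hconv z z (fun s _ => rfl) t ht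
  · rintro z' ⟨hz'c, hz'w, hz'eq⟩
    set w : ℝ → ℝ := fun r => z' (projIcc 0 T hT' r) with hwdef
    have hwcont : Continuous w :=
      hz'c.comp_continuous (continuous_subtype_val.comp continuous_projIcc)
        (fun x => (projIcc 0 T hT' x).2)
    have hweq : ∀ s ∈ Icc (0:ℝ) T, w s = z' s := by
      intro s hs
      simp [hwdef, projIcc_of_mem hT' hs]
    have hwbd : ∀ t ∈ Icc (0:ℝ) T, |w t| ≤ rbar * Real.exp (μ * t) := by
      intro t ht
      rw [hweq t ht]
      apply RV.unweight
      exact le_trans (RV.le_wnorm hz'c ht) hz'w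
    have hwfix : ∀ t ∈ Icc (0:ℝ) T, w t = Φ w t := by
      intro t ht
      calc w t = z' t := hweq t ht
        _ = z₀ t + (∫ s in (0:ℝ)..t, a t s * z' s) +
            (1/2) * ∫ s in (0:ℝ)..t, ∫ σ in (0:ℝ)..t, b t s σ * z' s * z' σ := hz'eq t ht
        _ = Z t + RV.I1 A w t + (1/2) * RV.I2 B w t :=
          (hconv z' w (fun s hs => (hweq s hs).symm) t ht).symm
        _ = Φ w t := rfl
    set M : ℝ := rbar * Real.exp (μ * T) with hMdef
    have hM0 : 0 ≤ M := mul_nonneg hR0 hexpT.le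
    have hzM : ∀ s ∈ Icc (0:ℝ) T, |z s| ≤ M := by
      intro s hs
      refine le_trans (hzbd s hs) ?_
      rw [hMdef]
      exact mul_le_mul_of_nonneg_left (hexple s hs) hR0
    have hwM : ∀ s ∈ Icc (0:ℝ) T, |w s| ≤ M := by
      intro s hs
      refine le_trans (hwbd s hs) ?_
      rw [hMdef]
      exact mul_le_mul_of_nonneg_left (hexple s hs) hR0
    set C : ℝ := abar + bbar * M * T with hCdef
    set Δ : ℝ → ℝ := fun s => |z s - w s| with hΔdef
    have hΔcont : Continuous Δ := (hzcont.sub hwcont).abs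
    set φ : ℝ → ℝ := fun r => ∫ s in (0:ℝ)..r, Δ s with hφdef
    have hΔbd : ∀ t ∈ Icc (0:ℝ) T, Δ t ≤ C * φ t := by
      intro t ht
      have h1 : z t - w t = Φ z t - Φ w t := by rw [← hfix t ht, ← hwfix t ht]
      have h2 := RV.est2 hAc hBc hzcont hwcont hAbd hBbd hM0 hzM hwM Z ht
      rw [hΔdef, hφdef, hCdef]
      simp only
      rw [h1]
      exact h2
    have hφd : ∀ r : ℝ, HasDerivAt φ (Δ r) r := by
      intro r
      exact intervalIntegral.integral_hasDerivAt_right (hΔcont.intervalIntegrable 0 r)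
        (hΔcont.stronglyMeasurableAtFilter _ _) hΔcont.continuousAt
    have hφcont : ContinuousOn φ (Icc 0 T) :=
      fun r _ => ((hφd r).continuousAt.continuousWithinAt)
    have hφ0 : φ 0 = 0 := intervalIntegral.integral_same
    have hφnn : ∀ r ∈ Icc (0:ℝ) T, 0 ≤ φ r := fun r hr =>
      intervalIntegral.integral_nonneg hr.1 (fun s _ => abs_nonneg _)
    have key := norm_le_gronwallBound_of_norm_deriv_right_le (f := φ) (f' := Δ)
      (δ := 0) (K := C) (ε := 0) (a := 0) (b := T) hφcont
      (fun x _ => (hφd x).hasDerivWithinAt) (by simp [hφ0]) ?_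
    · have hφz : ∀ x ∈ Icc (0:ℝ) T, φ x = 0 := by
        intro x hx
        have h1 := key x hx
        rw [Real.norm_eq_abs, abs_of_nonneg (hφnn x hx), sub_zero,
          gronwallBound_ε0_δ0] at h1
        exact le_antisymm h1 (hφnn x hx)
      intro t ht
      have h1 := hΔbd t ht
      rw [hφz t ht, mul_zero] at h1
      have h2 : Δ t = 0 := le_antisymm h1 (abs_nonneg _)
      have h3 : z t = w t := by
        rw [hΔdef] at h2
        simp only at h2
        rw [abs_eq_zero, sub_eq_zero] at h2
        exact h2
      exact (hweq t ht).symm.trans h3.symm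
    · intro x hx
      have hx' : x ∈ Icc (0:ℝ) T := ⟨hx.1, hx.2.le⟩
      rw [Real.norm_eq_abs, Real.norm_eq_abs, abs_of_nonneg (hφnn x hx'),
        abs_of_nonneg (abs_nonneg _), add_zero]
      exact hΔbd x hx'
end
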